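/- Corollary 3.7 (parallelized products on [−1,1]^d): There exists a constant K ∈ ℕ which satisfies for all d ∈ ℕ, ε ∈ (0,1], p ∈ [1,∞], and all f ∈ P([−1,1]^d) that Cost_p(f, √32·d³, ε) ≤ K·d^K·ε^{−1}. -/

import Mathlib

open scoped BigOperators ENNReal

noncomputable section

/-- A ReLU deep neural network with `L + 1` affine layers (so depth at least one),
layer dimensions `ℓ 0, ℓ 1, …, ℓ (L + 1)`, weight matrices `W k` and bias vectors `b k`
(values of `ℓ`, `W`, `b` beyond layer index `L` are irrelevant for the realization
and for the number of parameters). -/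
structure DNN where
  L : ℕ
  ℓ : ℕ → ℕ
  W : (k : ℕ) → Matrix (Fin (ℓ (k + 1))) (Fin (ℓ k)) ℝ
  b : (k : ℕ) → Fin (ℓ (k + 1)) → ℝ

namespace DNN

/-- The number of parameters `P(Φ) = ∑_{k=1}^{L} ℓ_k (ℓ_{k-1} + 1)` of a DNN. -/
def params (Φ : DNN) : ℕ :=
  ∑ k ∈ Finset.range (Φ.L + 1), Φ.ℓ (k + 1) * (Φ.ℓ k + 1)

/-- The `k`-th affine layer function `x ↦ W_k x + b_k`. -/
def affine (Φ : DNN) (k : ℕ) (x : Fin (Φ.ℓ k) → ℝ) : Fin (Φ.ℓ (k + 1)) → ℝ :=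
  fun i => (∑ j, Φ.W k i j * x j) + Φ.b k i

/-- The value after `k` affine layers, each followed by the ReLU activation. -/
def hidden (Φ : DNN) : (k : ℕ) → (Fin (Φ.ℓ 0) → ℝ) → (Fin (Φ.ℓ k) → ℝ)
  | 0 => id
  | k + 1 => fun x i => max (affine Φ k (hidden Φ k x) i) 0

/-- The realization `R(Φ)`: all affine layers with ReLU in between (no activation after
the last affine layer). -/
def realize (Φ : DNN) (x : Fin (Φ.ℓ 0) → ℝ) : Fin (Φ.ℓ (Φ.L + 1)) → ℝ :=
  affine Φ Φ.L (hidden Φ Φ.L x)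

/-- `Φ.Realizes f` means that the realization of `Φ` is the function `f : ℝ^m → ℝ^n`
(in particular the input and output dimensions of `Φ` are `m` and `n`). -/
def Realizes (Φ : DNN) {m n : ℕ} (f : (Fin m → ℝ) → (Fin n → ℝ)) : Prop :=
  ∃ (hm : Φ.ℓ 0 = m) (hn : Φ.ℓ (Φ.L + 1) = n),
    ∀ (x : Fin m → ℝ) (i : Fin n),
      f x i = realize Φ (fun j => x (Fin.cast hm j)) (Fin.cast hn.symm i)

end DNN

/-- The `ℓ^p`-norm on `ℝ^k` for `p ∈ [1,∞]`. -/
def lpNorm (p : ℝ≥0∞) {k : ℕ} (x : Fin k → ℝ) : ℝ :=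
  if p = ∞ then ⨆ i, |x i| else (∑ i, |x i| ^ p.toReal) ^ (1 / p.toReal)

/-- The hypercube `[a,b]^d ⊆ ℝ^d`. -/
def cube (d : ℕ) (a b : ℝ) : Set (Fin d → ℝ) :=
  Set.Icc (fun _ => a) (fun _ => b)

/-- `Cost p D f L ε`: the minimal number of parameters of a DNN whose realization
approximates `f` on `D` up to `ε` in the `ℓ^p`-norm and is `L`-Lipschitz on `D`
with respect to the `ℓ^p`-norm; `∞` if no such DNN exists. -/
def Cost (p : ℝ≥0∞) {m n : ℕ} (D : Set (Fin m → ℝ))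
    (f : (Fin m → ℝ) → (Fin n → ℝ)) (L ε : ℝ) : ℝ≥0∞ :=
  sInf { N : ℝ≥0∞ | ∃ Φ : DNN, ∃ g : (Fin m → ℝ) → (Fin n → ℝ),
    Φ.Realizes g ∧ N = (Φ.params : ℝ≥0∞) ∧
    (∀ x ∈ D, lpNorm p (g x - f x) ≤ ε) ∧
    (∀ x ∈ D, ∀ y ∈ D, lpNorm p (g x - g y) ≤ L * lpNorm p (x - y)) }

/-- Given block sizes `d : Fin n → ℕ`, the index in `Fin (∑ j, d j)` of the `l`-th
coordinate of the `i`-th block (blocks are arranged consecutively). -/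
def blockIdx {n : ℕ} (d : Fin n → ℕ) (i : Fin n) (l : Fin (d i)) : Fin (∑ j, d j) :=
  ⟨(∑ j ∈ Finset.univ.filter (fun j => j < i), d j) + l.1, by
    have h1 : l.1 < d i := l.2
    have h2 : (∑ j ∈ Finset.univ.filter (fun j => j < i), d j) + d i ≤ ∑ j, d j := by
      have hsplit := Finset.sum_filter_add_sum_filter_not Finset.univ (fun j => j < i) d
      have h3 : d i ≤ ∑ j ∈ Finset.univ.filter (fun j => ¬ j < i), d j :=
        Finset.single_le_sum (fun _ _ => Nat.zero_le _) (by simp)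
      omega
    omega⟩

/-- The class `𝒫_{k,p}([a,b]^d, L)`: parallelizations `f = f_1 □ ⋯ □ f_m` of real-valued
functions `f_i` of at most `k` variables that are `L`-Lipschitz w.r.t. the `ℓ^p`-norm. -/
def MemPLip (k : ℕ) (p : ℝ≥0∞) (a b L : ℝ) {d m : ℕ}
    (f : (Fin d → ℝ) → (Fin m → ℝ)) : Prop :=
  ∃ (dims : Fin m → ℕ) (hd : ∑ i, dims i = d) (g : ∀ i, (Fin (dims i) → ℝ) → ℝ),
    (∀ i, 0 < dims i) ∧ (∀ i, dims i ≤ k) ∧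
    (∀ i, ∀ x ∈ cube (dims i) a b, ∀ y ∈ cube (dims i) a b,
      |g i x - g i y| ≤ L * lpNorm p (x - y)) ∧
    (∀ x ∈ cube d a b, ∀ i : Fin m,
      f x i = g i (fun l => x (Fin.cast hd (blockIdx dims i l))))

/-- The class `M([a,b]^d)`: parallelizations of maximum functions `m_{d_1} □ ⋯ □ m_{d_m}`. -/
def MemMaxClass (a b : ℝ) {d m : ℕ} (f : (Fin d → ℝ) → (Fin m → ℝ)) : Prop :=
  ∃ (dims : Fin m → ℕ) (hd : ∑ i, dims i = d),
    (∀ i, 0 < dims i) ∧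
    (∀ x ∈ cube d a b, ∀ i : Fin m,
      f x i = ⨆ l : Fin (dims i), x (Fin.cast hd (blockIdx dims i l)))

/-- The class `P([a,b]^d)`: parallelizations of product functions `p_{d_1} □ ⋯ □ p_{d_m}`. -/
def MemProdClass (a b : ℝ) {d m : ℕ} (f : (Fin d → ℝ) → (Fin m → ℝ)) : Prop :=
  ∃ (dims : Fin m → ℕ) (hd : ∑ i, dims i = d),
    (∀ i, 0 < dims i) ∧
    (∀ x ∈ cube d a b, ∀ i : Fin m,
      f x i = ∏ l : Fin (dims i), x (Fin.cast hd (blockIdx dims i l)))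

/-- `f` coincides on `[a,b]^d` with the extended maximum function
`𝔪_d(x) = (max{x_1}, max{x_1,x_2}, …, max{x_1,…,x_d})`. -/
def IsExtMaxOn (a b : ℝ) {d m : ℕ} (f : (Fin d → ℝ) → (Fin m → ℝ)) : Prop :=
  ∃ h : d = m, ∀ x ∈ cube d a b, ∀ i : Fin m,
    f x i = (Finset.Iic (Fin.cast h.symm i)).sup' Finset.nonempty_Iic x

/-- `f` coincides on `[a,b]^d` with the extended product function
`𝔭_d(x) = (x_1, x_1 x_2, …, x_1 ⋯ x_d)`. -/
def IsExtProdOn (a b : ℝ) {d m : ℕ} (f : (Fin d → ℝ) → (Fin m → ℝ)) : Prop :=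
  ∃ h : d = m, ∀ x ∈ cube d a b, ∀ i : Fin m,
    f x i = ∏ j ∈ Finset.Iic (Fin.cast h.symm i), x j

/-- Iterated composition: `compSeq dims f k = f_{k-1} ∘ ⋯ ∘ f_1 ∘ f_0`. -/
def compSeq (dims : ℕ → ℕ) (f : ∀ i : ℕ, (Fin (dims i) → ℝ) → (Fin (dims (i + 1)) → ℝ)) :
    (k : ℕ) → (Fin (dims 0) → ℝ) → (Fin (dims k) → ℝ)
  | 0 => id
  | k + 1 => fun x => f k (compSeq dims f k x)


namespace Cor37
open Finset






lemma sum_range_add' (f : ℕ → ℝ) (a b : ℕ) :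
    ∑ i ∈ range (a+b), f i = ∑ i ∈ range a, f i + ∑ i ∈ range b, f (a+i) := by
  rw [range_eq_Ico, ← Finset.sum_Ico_consecutive f (Nat.zero_le a) (Nat.le_add_right a b),
    ← range_eq_Ico, Finset.sum_Ico_eq_sum_range]
  simp

lemma sum_range_two_mul (n : ℕ) (f : ℕ → ℝ) :
    ∑ i ∈ range (2*n), f i = ∑ r ∈ range n, (f (2*r) + f (2*r+1)) := by
  induction n with
  | zero => simp
  | succ n ih =>
    have h : 2*(n+1) = (2*n+1)+1 := by ring
    rw [h, sum_range_succ, sum_range_succ, ih, sum_range_succ, add_assoc]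

/-! ### piecewise linear interpolation of `t ↦ t²` on `[0,4]` -/

/-- grid point `r * (4/N)` -/
def gt (N r : ℕ) : ℝ := r * (4/N)

/-- ReLU coefficients of the interpolant -/
def cw (N r : ℕ) : ℝ := if r = 0 then 4/N else 8/N

/-- the piecewise linear interpolant of `t²` on `[0,4]` (as a ReLU combination, defined on all of ℝ) -/
def Ifun (N : ℕ) (u : ℝ) : ℝ := ∑ r ∈ range N, cw N r * max (u - gt N r) 0

def piece (N r : ℕ) (u : ℝ) : ℝ := min (max (u - gt N r) 0) (4/N)

def Efun (N : ℕ) (u : ℝ) : ℝ := ∑ r ∈ range N, piece N r u * (4/N - piece N r u)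

variable {N : ℕ}

lemma h_nonneg : (0:ℝ) ≤ 4/N := by positivity

lemma gt_succ (r : ℕ) : gt N (r+1) = gt N r + 4/N := by
  unfold gt; push_cast; ring

lemma gt_mono {r K : ℕ} (h : r ≤ K) : gt N r ≤ gt N K := by
  unfold gt
  have : (r:ℝ) ≤ K := by exact_mod_cast h
  nlinarith [h_nonneg (N := N)]

lemma gt_N (hN : 0 < N) : gt N N = 4 := by
  unfold gt
  field_simp

lemma piece_nonneg (r : ℕ) (u : ℝ) : 0 ≤ piece N r u :=
  le_min (le_max_right _ _) h_nonneg

lemma piece_le (r : ℕ) (u : ℝ) : piece N r u ≤ 4/N := min_le_right _ _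

lemma piece_mono (r : ℕ) {u v : ℝ} (h : u ≤ v) : piece N r u ≤ piece N r v :=
  min_le_min (max_le_max (by linarith) le_rfl) le_rfl

lemma piece_sum (u : ℝ) (r K : ℕ) (h : r ≤ K) :
    ∑ i ∈ Ico r K, piece N i u = min (max (u - gt N r) 0) (gt N K - gt N r) := by
  induction K, h using Nat.le_induction with
  | base =>
    simp [min_eq_right (le_max_right (u - gt N r) 0)]
  | succ K hrK ih =>
    rw [Finset.sum_Ico_succ_top hrK, ih, gt_succ]
    have htr : gt N r ≤ gt N K := gt_mono hrK
    rcases le_total u (gt N K) with hu | hu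
    · have h1 : piece N K u = 0 := by
        unfold piece
        rw [max_eq_right (by linarith), min_eq_left h_nonneg]
      have hm : max (u - gt N r) 0 ≤ gt N K - gt N r := max_le (by linarith) (by linarith)
      rw [h1, add_zero, min_eq_left hm, min_eq_left (hm.trans (by linarith [h_nonneg (N:=N)]))]
    · have h1 : piece N K u = min (u - gt N K) (4/N) := by
        unfold piece; rw [max_eq_left (by linarith)]
      have h2 : max (u - gt N r) 0 = u - gt N r := max_eq_left (by linarith)
      rw [h1, h2, min_eq_right (by linarith)]
      have : min (u - gt N r) (gt N K + 4/N - gt N r)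
          = min (u - gt N K) (4/N) + (gt N K - gt N r) := by
        rw [← min_add_add_right]; ring_nf
      rw [this]; ring

lemma piece_total (hN : 0 < N) {u : ℝ} (h0 : 0 ≤ u) (h4 : u ≤ 4) :
    ∑ i ∈ range N, piece N i u = u := by
  rw [range_eq_Ico, piece_sum u 0 N (Nat.zero_le N)]
  have : gt N 0 = 0 := by simp [gt]
  rw [this, gt_N hN, sub_zero, sub_zero, max_eq_left h0, min_eq_left h4]

lemma relu_eq_sum_piece {u : ℝ} (h4 : u ≤ 4) {r : ℕ} (hr : r ≤ N) (hN : 0 < N) :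
    max (u - gt N r) 0 = ∑ i ∈ Ico r N, piece N i u := by
  rw [piece_sum u r N hr]
  have h1 : gt N N = 4 := gt_N hN
  rw [min_eq_left]
  have : gt N r ≤ 4 := h1 ▸ gt_mono hr
  exact max_le (by linarith) (by linarith)

lemma cw_partial (i : ℕ) : ∑ r ∈ range (i+1), cw N r = (2*i+1) * (4/N) := by
  induction i with
  | zero => simp [cw]
  | succ i ih =>
    rw [sum_range_succ, ih]
    have : cw N (i+1) = 8/N := by simp [cw]
    rw [this]; push_cast; ring

lemma swap_sum (F : ℕ → ℕ → ℝ) :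
    ∑ r ∈ range N, ∑ i ∈ Ico r N, F r i = ∑ i ∈ range N, ∑ r ∈ range (i+1), F r i := by
  have h1 : ∀ r, Ico r N = (range N).filter (fun i => r ≤ i) := by
    intro r; ext i; simp only [Finset.mem_Ico, Finset.mem_filter, Finset.mem_range]; omega
  have h2 : ∀ i ∈ range N, range (i+1) = (range N).filter (fun r => r ≤ i) := by
    intro i hi; simp at hi; ext r; simp; omega
  calc ∑ r ∈ range N, ∑ i ∈ Ico r N, F r i
      = ∑ r ∈ range N, ∑ i ∈ range N, if r ≤ i then F r i else 0 := by
        refine Finset.sum_congr rfl fun r _ => ?_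
        rw [h1 r, Finset.sum_filter]
    _ = ∑ i ∈ range N, ∑ r ∈ range N, if r ≤ i then F r i else 0 := Finset.sum_comm
    _ = ∑ i ∈ range N, ∑ r ∈ range (i+1), F r i := by
        refine Finset.sum_congr rfl fun i hi => ?_
        rw [h2 i hi, Finset.sum_filter]

lemma telescope_sq {u : ℝ} (h0 : 0 ≤ u) (K : ℕ) :
    ∑ i ∈ range K, ((gt N i + piece N i u)^2 - (gt N i)^2) = (min u (gt N K))^2 := by
  induction K with
  | zero =>
    simp [gt, min_eq_right h0]
  | succ K ih =>
    rw [sum_range_succ, ih, gt_succ]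
    rcases le_total u (gt N K) with hu | hu
    · have h1 : piece N K u = 0 := by
        unfold piece; rw [max_eq_right (by linarith), min_eq_left h_nonneg]
      have h2 : min u (gt N K) = u := min_eq_left hu
      have h3 : min u (gt N K + 4/N) = u := min_eq_left (by linarith [h_nonneg (N:=N)])
      rw [h1, h2, h3]; ring
    · have h1 : piece N K u = min (u - gt N K) (4/N) := by
        unfold piece; rw [max_eq_left (by linarith)]
      have h2 : min u (gt N K) = gt N K := min_eq_right hu
      have h3 : gt N K + min (u - gt N K) (4/N) = min u (gt N K + 4/N) := by
        rw [← min_add_add_left]; ring_nf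
      rw [h1, h2, h3]; ring

lemma Ifun_eq (hN : 0 < N) {u : ℝ} (h0 : 0 ≤ u) (h4 : u ≤ 4) :
    Ifun N u = u^2 + Efun N u := by
  unfold Ifun
  calc ∑ r ∈ range N, cw N r * max (u - gt N r) 0
      = ∑ r ∈ range N, ∑ i ∈ Ico r N, cw N r * piece N i u := by
        refine Finset.sum_congr rfl fun r hr => ?_
        simp at hr
        rw [relu_eq_sum_piece h4 (le_of_lt hr) hN, Finset.mul_sum]
    _ = ∑ i ∈ range N, ∑ r ∈ range (i+1), cw N r * piece N i u := swap_sum _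
    _ = ∑ i ∈ range N, ((2*i+1) * (4/N)) * piece N i u := by
        refine Finset.sum_congr rfl fun i _ => ?_
        rw [← Finset.sum_mul, cw_partial]
    _ = ∑ i ∈ range N, (((gt N i + piece N i u)^2 - (gt N i)^2)
          + piece N i u * (4/N - piece N i u)) := by
        refine Finset.sum_congr rfl fun i _ => ?_
        unfold gt; ring
    _ = u^2 + Efun N u := by
        rw [Finset.sum_add_distrib, telescope_sq h0, gt_N hN, min_eq_left h4]
        rfl

lemma Efun_nonneg (u : ℝ) : 0 ≤ Efun N u :=
  Finset.sum_nonneg fun r _ => mul_nonneg (piece_nonneg r u) (by linarith [piece_le (N:=N) r u])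

lemma Efun_le (hN : 0 < N) (u : ℝ) : Efun N u ≤ 4/N := by
  have h : ∀ r ∈ range N, piece N r u * (4/N - piece N r u) ≤ (4/N)^2/4 := by
    intro r _
    nlinarith [piece_nonneg (N:=N) r u, piece_le (N:=N) r u, sq_nonneg (piece N r u - (4/N)/2)]
  calc Efun N u ≤ ∑ _r ∈ range N, ((4:ℝ)/N)^2/4 := Finset.sum_le_sum h
    _ = (N:ℝ) * ((4/N)^2/4) := by rw [Finset.sum_const, card_range]; simp [nsmul_eq_mul]
    _ = 4/N := by
        have : (N:ℝ) ≠ 0 := Nat.cast_ne_zero.2 hN.ne'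
        field_simp

lemma abs_sum_piece {u v : ℝ} (hN : 0 < N) (hu : u ∈ Set.Icc (0:ℝ) 4) (hv : v ∈ Set.Icc (0:ℝ) 4) :
    ∑ r ∈ range N, |piece N r u - piece N r v| = |u - v| := by
  rcases le_total u v with h | h
  · have : ∀ r ∈ range N, |piece N r u - piece N r v| = piece N r v - piece N r u := by
      intro r _; rw [abs_of_nonpos (by linarith [piece_mono (N:=N) r h])]; ring
    rw [Finset.sum_congr rfl this, Finset.sum_sub_distrib,
      piece_total hN hv.1 hv.2, piece_total hN hu.1 hu.2, abs_of_nonpos (by linarith)]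
    ring
  · have : ∀ r ∈ range N, |piece N r u - piece N r v| = piece N r u - piece N r v := by
      intro r _; rw [abs_of_nonneg (by linarith [piece_mono (N:=N) r h])]
    rw [Finset.sum_congr rfl this, Finset.sum_sub_distrib,
      piece_total hN hv.1 hv.2, piece_total hN hu.1 hu.2, abs_of_nonneg (by linarith)]

lemma Efun_lip (hN : 0 < N) {u v : ℝ} (hu : u ∈ Set.Icc (0:ℝ) 4) (hv : v ∈ Set.Icc (0:ℝ) 4) :
    |Efun N u - Efun N v| ≤ (4/N) * |u - v| := by
  unfold Efun
  rw [← Finset.sum_sub_distrib]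
  calc |∑ r ∈ range N, (piece N r u * (4/N - piece N r u) - piece N r v * (4/N - piece N r v))|
      ≤ ∑ r ∈ range N, |piece N r u * (4/N - piece N r u) - piece N r v * (4/N - piece N r v)| :=
        Finset.abs_sum_le_sum_abs _ _
    _ ≤ ∑ r ∈ range N, (4/N) * |piece N r u - piece N r v| := by
        refine Finset.sum_le_sum fun r _ => ?_
        have e : piece N r u * (4/N - piece N r u) - piece N r v * (4/N - piece N r v)
            = (piece N r u - piece N r v) * (4/N - piece N r u - piece N r v) := by ring
        rw [e, abs_mul, mul_comm]
        refine mul_le_mul_of_nonneg_right ?_ (abs_nonneg _)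
        rw [abs_le]
        constructor <;>
          nlinarith [piece_nonneg (N:=N) r u, piece_nonneg (N:=N) r v,
            piece_le (N:=N) r u, piece_le (N:=N) r v]
    _ = (4/N) * |u - v| := by rw [← Finset.mul_sum, abs_sum_piece hN hu hv]


/-! ### approximate multiplication -/

/-- approximate multiplication via `ab = ((a+b)² - (a-b)²)/4` and the interpolant of `t²` -/
def Mt (N : ℕ) (a b : ℝ) : ℝ := (Ifun N |a+b| - Ifun N |a-b|)/4

lemma Mt_eq (hN : 0 < N) {a b : ℝ} (ha : |a| ≤ 2) (hb : |b| ≤ 2) :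
    Mt N a b = a*b + (Efun N |a+b| - Efun N |a-b|)/4 := by
  rw [abs_le] at ha hb
  have h1 : |a+b| ≤ 4 := abs_le.2 ⟨by linarith, by linarith⟩
  have h2 : |a-b| ≤ 4 := abs_le.2 ⟨by linarith, by linarith⟩
  unfold Mt
  rw [Ifun_eq hN (abs_nonneg _) h1, Ifun_eq hN (abs_nonneg _) h2, sq_abs, sq_abs]
  ring

lemma Mt_err (hN : 0 < N) {a b : ℝ} (ha : |a| ≤ 2) (hb : |b| ≤ 2) :
    |Mt N a b - a*b| ≤ 1/N := by
  rw [Mt_eq hN ha hb]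
  have e1 := Efun_nonneg (N:=N) |a+b|
  have e2 := Efun_nonneg (N:=N) |a-b|
  have e3 := Efun_le hN |a+b|
  have e4 := Efun_le hN |a-b|
  have h : a * b + (Efun N |a+b| - Efun N |a-b|)/4 - a*b = (Efun N |a+b| - Efun N |a-b|)/4 := by
    ring
  rw [h, abs_le]
  have h4 : (4:ℝ)/N = 4*(1/N) := by ring
  constructor <;> linarith

lemma abs_sub_le_abs_add_abs (x y : ℝ) : |x - y| ≤ |x| + |y| := by
  rw [sub_eq_add_neg]
  simpa [abs_neg] using abs_add_le x (-y)

lemma Mt_lip (hN : 0 < N) {a a' b b' : ℝ} (ha : |a| ≤ 2) (ha' : |a'| ≤ 2)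
    (hb : |b| ≤ 1) (hb' : |b'| ≤ 1) :
    |Mt N a b - Mt N a' b'| ≤ (1 + 2/N) * |a - a'| + (2 + 2/N) * |b - b'| := by
  have hb2 : |b| ≤ 2 := hb.trans one_le_two
  have hb2' : |b'| ≤ 2 := hb'.trans one_le_two
  rw [Mt_eq hN ha hb2, Mt_eq hN ha' hb2']
  have haa := abs_le.1 ha; have haa' := abs_le.1 ha'
  have hbb := abs_le.1 hb; have hbb' := abs_le.1 hb'
  set u1 := |a+b| with hu1
  set u2 := |a'+b'| with hu2
  set u3 := |a-b| with hu3
  set u4 := |a'-b'| with hu4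
  have hx1 : u1 ≤ 4 := abs_le.2 ⟨by linarith, by linarith⟩
  have hx2 : u2 ≤ 4 := abs_le.2 ⟨by linarith, by linarith⟩
  have hx3 : u3 ≤ 4 := abs_le.2 ⟨by linarith, by linarith⟩
  have hx4 : u4 ≤ 4 := abs_le.2 ⟨by linarith, by linarith⟩
  have h4 : (0:ℝ) ≤ 4/N := by positivity
  have k1 : |Efun N u1 - Efun N u2| ≤ (4/N) * (|a-a'| + |b-b'|) := by
    refine (Efun_lip hN ⟨abs_nonneg _, hx1⟩ ⟨abs_nonneg _, hx2⟩).trans ?_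
    have t1 : |u1 - u2| ≤ |a-a'| + |b-b'| := by
      refine (abs_abs_sub_abs_le_abs_sub _ _).trans ?_
      have e : (a+b) - (a'+b') = (a-a') + (b-b') := by ring
      rw [e]; exact abs_add_le _ _
    exact mul_le_mul_of_nonneg_left t1 h4
  have k2 : |Efun N u3 - Efun N u4| ≤ (4/N) * (|a-a'| + |b-b'|) := by
    refine (Efun_lip hN ⟨abs_nonneg _, hx3⟩ ⟨abs_nonneg _, hx4⟩).trans ?_
    have t1 : |u3 - u4| ≤ |a-a'| + |b-b'| := by
      refine (abs_abs_sub_abs_le_abs_sub _ _).trans ?_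
      have e : (a-b) - (a'-b') = (a-a') - (b-b') := by ring
      rw [e]; exact abs_sub_le_abs_add_abs _ _
    exact mul_le_mul_of_nonneg_left t1 h4
  have kprod : |a*b - a'*b'| ≤ |a-a'| + 2 * |b-b'| := by
    have e : a*b - a'*b' = (a-a')*b + a'*(b-b') := by ring
    rw [e]
    refine (abs_add_le _ _).trans ?_
    rw [abs_mul, abs_mul]
    have g1 : |a-a'| * |b| ≤ |a-a'| * 1 := mul_le_mul_of_nonneg_left hb (abs_nonneg _)
    have g2 : |a'| * |b-b'| ≤ 2 * |b-b'| := mul_le_mul_of_nonneg_right ha' (abs_nonneg _)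
    linarith
  have split : (a * b + (Efun N u1 - Efun N u3)/4)
      - (a' * b' + (Efun N u2 - Efun N u4)/4)
      = (a*b - a'*b') + (Efun N u1 - Efun N u2)/4
        - (Efun N u3 - Efun N u4)/4 := by ring
  rw [split]
  have c1 := abs_sub_le_abs_add_abs ((a*b - a'*b') + (Efun N u1 - Efun N u2)/4)
    ((Efun N u3 - Efun N u4)/4)
  have c2 := abs_add_le (a*b - a'*b') ((Efun N u1 - Efun N u2)/4)
  have d1 : |(Efun N u1 - Efun N u2)/4| = |Efun N u1 - Efun N u2|/4 := by
    rw [abs_div]; norm_num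
  have d2 : |(Efun N u3 - Efun N u4)/4| = |Efun N u3 - Efun N u4|/4 := by
    rw [abs_div]; norm_num
  rw [d1] at c2; rw [d2] at c1
  have hh : (2:ℝ)/N = (4/N)/2 := by ring
  nlinarith [abs_nonneg (a-a'), abs_nonneg (b-b')]
/-! ### block structure and the sequential approximate product -/

section Blocks

variable (m N : ℕ) (dims : Fin m → ℕ)

/-- extension of `dims` to `ℕ` -/
def bdims : ℕ → ℕ := fun i => if h : i < m then dims ⟨i, h⟩ else 0

/-- prefix sums: start position of block `i` -/
def bsig : ℕ → ℕ := fun i => ∑ i' ∈ range i, bdims m dims i'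

/-- `j` is the first position of some block -/
def bIsStart (j : ℕ) : Prop := j ∈ (Finset.range m).image (bsig m dims)

instance (j : ℕ) : Decidable (bIsStart m dims j) := by unfold bIsStart; exact inferInstance

/-- the sequential state: approximate products along blocks -/
def ZZ (x : ℕ → ℝ) : ℕ → ℝ
  | 0 => x 0
  | (j+1) => if bIsStart m dims (j+1) then x (j+1) else Mt N (ZZ x j) (x (j+1))

/-- true partial product of block `i` up to offset `l` -/
def bP (x : ℕ → ℝ) (i l : ℕ) : ℝ := ∏ l' ∈ range (l+1), x (bsig m dims i + l')

variable {m N dims}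

lemma bsig_succ (i : ℕ) : bsig m dims (i+1) = bsig m dims i + bdims m dims i :=
  Finset.sum_range_succ _ _

lemma bsig_mono {i j : ℕ} (h : i ≤ j) : bsig m dims i ≤ bsig m dims j :=
  Finset.sum_le_sum_of_subset (Finset.range_subset_range.2 h)

lemma isStart_sig {i : ℕ} (h : i < m) : bIsStart m dims (bsig m dims i) :=
  Finset.mem_image.2 ⟨i, Finset.mem_range.2 h, rfl⟩

lemma not_isStart_inside {i l : ℕ} (him : i < m) (hl : 0 < l) (hl2 : l < bdims m dims i) :
    ¬ bIsStart m dims (bsig m dims i + l) := by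
  intro h
  rcases Finset.mem_image.1 h with ⟨i'', hmem, heq⟩
  rcases le_or_gt i'' i with hle | hgt
  · have := bsig_mono (m:=m) (dims:=dims) hle
    omega
  · have h1 : bsig m dims (i+1) ≤ bsig m dims i'' := bsig_mono hgt
    have h2 := bsig_succ (m:=m) (dims:=dims) i
    omega

lemma ZZ_start (x : ℕ → ℝ) {j : ℕ} (h : bIsStart m dims j) : ZZ m N dims x j = x j := by
  cases j with
  | zero => rfl
  | succ j => simp [ZZ, h]

lemma ZZ_step (x : ℕ → ℝ) {j : ℕ} (h : ¬ bIsStart m dims (j+1)) :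
    ZZ m N dims x (j+1) = Mt N (ZZ m N dims x j) (x (j+1)) := by
  simp [ZZ, h]

lemma abs_bP_le_one {x : ℕ → ℝ} (hx : ∀ j, |x j| ≤ 1) (i l : ℕ) : |bP m dims x i l| ≤ 1 := by
  unfold bP
  rw [Finset.abs_prod]
  exact Finset.prod_le_one (fun _ _ => abs_nonneg _) (fun j _ => hx _)

lemma ZZ_err (hN : 0 < N) (x : ℕ → ℝ) (hx : ∀ j, |x j| ≤ 1) {i : ℕ} (him : i < m)
    (hdN : bdims m dims i ≤ N) :
    ∀ l, l < bdims m dims i →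
      |ZZ m N dims x (bsig m dims i + l) - bP m dims x i l| ≤ l / N ∧
      |ZZ m N dims x (bsig m dims i + l)| ≤ 1 + l / N := by
  intro l
  induction l with
  | zero =>
    intro _
    have h0 : ZZ m N dims x (bsig m dims i + 0) = x (bsig m dims i) := by
      rw [Nat.add_zero]; exact ZZ_start x (isStart_sig him)
    have hP : bP m dims x i 0 = x (bsig m dims i) := by
      unfold bP; simp
    rw [h0, hP]
    simp [hx _]
  | succ l ih =>
    intro hl
    have hihl : l < bdims m dims i := by omega
    obtain ⟨ih1, ih2⟩ := ih hihl
    have hNr : (0:ℝ) < N := by exact_mod_cast hN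
    have hlN : (l:ℝ) / N ≤ 1 := by
      rw [div_le_one hNr]
      exact_mod_cast le_trans (le_of_lt hihl) hdN
    set a := ZZ m N dims x (bsig m dims i + l) with ha
    set b := x (bsig m dims i + (l+1)) with hb
    have hstep : ZZ m N dims x (bsig m dims i + (l+1)) = Mt N a b := by
      have e : bsig m dims i + (l+1) = (bsig m dims i + l) + 1 := by omega
      rw [e, ZZ_step x]
      rw [← e]
      exact not_isStart_inside him (by omega) hl
    have ha2 : |a| ≤ 2 := by linarith
    have hb1 : |b| ≤ 1 := hx _
    have hb2 : |b| ≤ 2 := hb1.trans one_le_two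
    have hmul := Mt_err hN ha2 hb2
    have hPsucc : bP m dims x i (l+1) = bP m dims x i l * b := by
      unfold bP; rw [Finset.prod_range_succ]
    have key : |Mt N a b - bP m dims x i (l+1)| ≤ (l+1) / N := by
      have e : Mt N a b - bP m dims x i (l+1)
          = (Mt N a b - a*b) + (a - bP m dims x i l) * b := by
        rw [hPsucc]; ring
      rw [e]
      refine (abs_add_le _ _).trans ?_
      rw [abs_mul]
      have g : |a - bP m dims x i l| * |b| ≤ (l/N) * 1 :=
        mul_le_mul ih1 hb1 (abs_nonneg _) (by positivity)
      have e2 : ((l:ℝ)+1)/N = 1/N + l/N := by ring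
      push_cast
      rw [e2]
      linarith
    constructor
    · rw [hstep]; exact_mod_cast key
    · rw [hstep]
      have : |Mt N a b| ≤ |bP m dims x i (l+1)| + (l+1)/N := by
        have := abs_sub_abs_le_abs_sub (Mt N a b) (bP m dims x i (l+1))
        linarith [key]
      have hb1' := abs_bP_le_one (m:=m) (dims:=dims) hx i (l+1)
      push_cast at this ⊢
      linarith

lemma ZZ_lip (hN : 0 < N) (x y : ℕ → ℝ) (hx : ∀ j, |x j| ≤ 1) (hy : ∀ j, |y j| ≤ 1)
    {M : ℝ} (hM : 0 ≤ M) (hMd : ∀ j, |x j - y j| ≤ M) {i : ℕ} (him : i < m)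
    (hdN : bdims m dims i ≤ N) (hbig : 4 * bdims m dims i + 5 ≤ N) :
    ∀ l, l < bdims m dims i →
      |ZZ m N dims x (bsig m dims i + l) - ZZ m N dims y (bsig m dims i + l)|
        ≤ 4 * (l+1) * M := by
  intro l
  induction l with
  | zero =>
    intro _
    have h0x : ZZ m N dims x (bsig m dims i + 0) = x (bsig m dims i) := by
      rw [Nat.add_zero]; exact ZZ_start x (isStart_sig him)
    have h0y : ZZ m N dims y (bsig m dims i + 0) = y (bsig m dims i) := by
      rw [Nat.add_zero]; exact ZZ_start y (isStart_sig him)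
    rw [h0x, h0y]
    have := hMd (bsig m dims i)
    push_cast
    linarith
  | succ l ih =>
    intro hl
    have hihl : l < bdims m dims i := by omega
    have ih1 := ih hihl
    have hNr : (0:ℝ) < N := by exact_mod_cast hN
    have hlN : (l:ℝ) / N ≤ 1 := by
      rw [div_le_one hNr]
      exact_mod_cast le_trans (le_of_lt hihl) hdN
    set a := ZZ m N dims x (bsig m dims i + l) with hadef
    set a' := ZZ m N dims y (bsig m dims i + l) with hadef'
    set b := x (bsig m dims i + (l+1)) with hbdef
    set b' := y (bsig m dims i + (l+1)) with hbdef'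
    have hstepx : ZZ m N dims x (bsig m dims i + (l+1)) = Mt N a b := by
      have e : bsig m dims i + (l+1) = (bsig m dims i + l) + 1 := by omega
      rw [e, ZZ_step x]; rw [← e]
      exact not_isStart_inside him (by omega) hl
    have hstepy : ZZ m N dims y (bsig m dims i + (l+1)) = Mt N a' b' := by
      have e : bsig m dims i + (l+1) = (bsig m dims i + l) + 1 := by omega
      rw [e, ZZ_step y]; rw [← e]
      exact not_isStart_inside him (by omega) hl
    have ha2 : |a| ≤ 2 := by
      have := (ZZ_err hN x hx him hdN l hihl).2
      rw [← hadef] at this; linarith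
    have ha2' : |a'| ≤ 2 := by
      have := (ZZ_err hN y hy him hdN l hihl).2
      rw [← hadef'] at this; linarith
    have hb1 : |b| ≤ 1 := hbdef ▸ hx _
    have hb1' : |b'| ≤ 1 := hbdef' ▸ hy _
    have hlip := Mt_lip hN ha2 ha2' hb1 hb1'
    rw [hstepx, hstepy]
    refine hlip.trans ?_
    have hbM : |b - b'| ≤ M := hMd _
    have h9 : (4*(l:ℝ)+9) ≤ N := by
      exact_mod_cast (by omega : 4*l + 9 ≤ N)
    have hq9 : (0:ℝ) < 4*(l:ℝ)+9 := by positivity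
    have h2N : (2:ℝ)/N ≤ 2/(4*(l:ℝ)+9) :=
      div_le_div_of_nonneg_left (by norm_num) hq9 h9
    have hq : (1 + 2/N) * |a - a'| + (2 + 2/N) * |b - b'|
        ≤ (1 + 2/(4*(l:ℝ)+9)) * (4*(l+1)*M) + (2 + 2/(4*(l:ℝ)+9)) * M := by
      have n1 : (0:ℝ) ≤ |a - a'| := abs_nonneg _
      have n2 : (0:ℝ) ≤ |b - b'| := abs_nonneg _
      have m1 : |a - a'| ≤ 4*(l+1)*M := ih1
      have h2N' : (0:ℝ) < 2/N := by positivity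
      nlinarith [h2N, hbM, mul_le_mul_of_nonneg_left m1 (le_of_lt h2N')]
    refine hq.trans ?_
    set q := 4*(l:ℝ)+9 with hqdef
    have expand : (1 + 2/q) * (4*((l:ℝ)+1)*M) + (2 + 2/q)*M
        = 4*((l:ℝ)+1)*M + 2*M + (2/q)*((4*((l:ℝ)+1)+1)*M) := by ring
    have bound : (2/q)*((4*((l:ℝ)+1)+1)*M) ≤ 2*M := by
      have hle : (4*((l:ℝ)+1)+1)*M ≤ q*M := by
        apply mul_le_mul_of_nonneg_right _ hM
        rw [hqdef]; linarith
      have h2q : (0:ℝ) ≤ 2/q := by positivity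
      calc (2/q)*((4*((l:ℝ)+1)+1)*M) ≤ (2/q)*(q*M) := mul_le_mul_of_nonneg_left hle h2q
        _ = 2*M := by field_simp
    push_cast
    rw [expand]
    linarith
end Blocks

/-! ### lpNorm lemmas -/

lemma lpNorm_nonneg {k : ℕ} (p : ℝ≥0∞) (z : Fin k → ℝ) : 0 ≤ lpNorm p z := by
  unfold lpNorm
  split_ifs with h
  · exact Real.iSup_nonneg fun i => abs_nonneg _
  · exact Real.rpow_nonneg
      (Finset.sum_nonneg fun i _ => Real.rpow_nonneg (abs_nonneg _) _) _

lemma toReal_one_le {p : ℝ≥0∞} (hp : 1 ≤ p) (h : ¬ p = ∞) : 1 ≤ p.toReal := by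
  rw [← ENNReal.toReal_one]
  exact ENNReal.toReal_mono h hp

lemma coord_le_lpNorm {k : ℕ} {p : ℝ≥0∞} (hp : 1 ≤ p) (z : Fin k → ℝ) (i : Fin k) :
    |z i| ≤ lpNorm p z := by
  unfold lpNorm
  split_ifs with h
  · exact le_ciSup (f := fun j => |z j|) (Set.Finite.bddAbove (Set.finite_range _)) i
  · have hq : 1 ≤ p.toReal := toReal_one_le hp h
    have hq0 : 0 < p.toReal := lt_of_lt_of_le one_pos hq
    have h1 : |z i| ^ p.toReal ≤ ∑ j, |z j| ^ p.toReal :=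
      Finset.single_le_sum (fun j _ => Real.rpow_nonneg (abs_nonneg _) _) (Finset.mem_univ i)
    have h2 : (|z i| ^ p.toReal) ^ (1/p.toReal) ≤ (∑ j, |z j| ^ p.toReal) ^ (1/p.toReal) :=
      Real.rpow_le_rpow (Real.rpow_nonneg (abs_nonneg _) _) h1 (by positivity)
    calc |z i| = (|z i| ^ p.toReal) ^ (1/p.toReal) := by
          rw [← Real.rpow_mul (abs_nonneg _), mul_one_div, div_self hq0.ne', Real.rpow_one]
      _ ≤ _ := h2

lemma lpNorm_le {k : ℕ} {p : ℝ≥0∞} (hp : 1 ≤ p) (hk : 0 < k) (z : Fin k → ℝ) {c : ℝ}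
    (hc : 0 ≤ c) (h : ∀ i, |z i| ≤ c) : lpNorm p z ≤ k * c := by
  have hk1 : (1:ℝ) ≤ k := by exact_mod_cast hk
  unfold lpNorm
  split_ifs with hinf
  · have : Nonempty (Fin k) := ⟨⟨0, hk⟩⟩
    refine ciSup_le fun i => (h i).trans ?_
    exact le_mul_of_one_le_left hc hk1
  · have hq : 1 ≤ p.toReal := toReal_one_le hp hinf
    have hq0 : 0 < p.toReal := lt_of_lt_of_le one_pos hq
    have hsum : ∑ j, |z j| ^ p.toReal ≤ (k:ℝ) * c ^ p.toReal := by
      calc ∑ j, |z j| ^ p.toReal ≤ ∑ _j : Fin k, c ^ p.toReal :=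
            Finset.sum_le_sum fun i _ => Real.rpow_le_rpow (abs_nonneg _) (h i) hq0.le
        _ = (k:ℝ) * c ^ p.toReal := by
            rw [Finset.sum_const, Finset.card_univ, Fintype.card_fin]
            simp [nsmul_eq_mul]
    calc (∑ j, |z j| ^ p.toReal) ^ (1/p.toReal)
        ≤ ((k:ℝ) * c ^ p.toReal) ^ (1/p.toReal) :=
          Real.rpow_le_rpow
            (Finset.sum_nonneg fun i _ => Real.rpow_nonneg (abs_nonneg _) _) hsum (by positivity)
      _ = (k:ℝ) ^ (1/p.toReal) * (c ^ p.toReal) ^ (1/p.toReal) :=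
          Real.mul_rpow (by positivity) (Real.rpow_nonneg hc _)
      _ = (k:ℝ) ^ (1/p.toReal) * c := by
          rw [← Real.rpow_mul hc, mul_one_div, div_self hq0.ne', Real.rpow_one]
      _ ≤ (k:ℝ) * c := by
          have h1 : (k:ℝ) ^ (1/p.toReal) ≤ (k:ℝ) ^ (1:ℝ) :=
            Real.rpow_le_rpow_of_exponent_le hk1 (by
              rw [div_le_one hq0]; exact hq)
          rw [Real.rpow_one] at h1
          exact mul_le_mul_of_nonneg_right h1 hc
/-! ### the network -/

section Net

variable (d m N : ℕ) (dims : Fin m → ℕ)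

/-- Kronecker delta row entry -/
def dlt (c j : ℕ) : ℝ := if j = c then 1 else 0

/-- coefficients extracting the approximate product from an s-layer -/
def scoef (j : ℕ) : ℝ :=
  if j < d then 0
  else if (j - d) % 2 = 0 then cw N ((j-d)/2) / 4
  else - (cw N ((j-d)/2) / 4)

/-- row computing the updated value of slot `t` from the s-layer of step `t-1` -/
def arow (t j : ℕ) : ℝ := if bIsStart m dims t then dlt t j else scoef d N j

def abias (t : ℕ) : ℝ := if bIsStart m dims t then -2 else 0

/-- layer widths -/
def lfun : ℕ → ℕ := fun k =>
  if k = 0 then d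
  else if k = 2*d - 1 then m
  else if k % 2 = 1 then d + 4
  else d + 2*N

/-- end position of block `i` -/
def bend (i : ℕ) : ℕ := bsig m dims i + bdims m dims i - 1

/-- the weight entries -/
def wfun (k i j : ℕ) : ℝ :=
  if k = 0 then
    (if i < d then dlt i j
     else if i = d then dlt 0 j + dlt 1 j
     else if i = d+1 then -(dlt 0 j + dlt 1 j)
     else if i = d+2 then dlt 0 j - dlt 1 j
     else dlt 1 j - dlt 0 j)
  else if k % 2 = 1 then
    (if i < d then dlt i j
     else if (i - d) % 2 = 0 then dlt d j + dlt (d+1) j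
     else dlt (d+2) j + dlt (d+3) j)
  else if k = 2*d - 2 then
    (if bend m dims i ≤ d - 2 ∨ bIsStart m dims (bend m dims i) then dlt (bend m dims i) j
     else scoef d N j)
  else
    (if i < d then
       (if i = k/2 then arow d m N dims (k/2) j else dlt i j)
     else if i = d then arow d m N dims (k/2) j + dlt (k/2+1) j
     else if i = d+1 then -(arow d m N dims (k/2) j) - dlt (k/2+1) j
     else if i = d+2 then arow d m N dims (k/2) j - dlt (k/2+1) j
     else dlt (k/2+1) j - arow d m N dims (k/2) j)

/-- the bias entries -/
def bfun (k i : ℕ) : ℝ :=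
  if k = 0 then (if i < d then 2 else 0)
  else if k % 2 = 1 then
    (if i < d then 0 else - gt N ((i - d)/2))
  else if k = 2*d - 2 then
    (if bend m dims i ≤ d - 2 ∨ bIsStart m dims (bend m dims i) then -2 else 0)
  else
    (if i < d then (if i = k/2 then abias m dims (k/2) + 2 else 0)
     else if i = d then abias m dims (k/2) + (-2)
     else if i = d+1 then -(abias m dims (k/2)) + 2
     else if i = d+2 then abias m dims (k/2) + 2
     else -(abias m dims (k/2)) + (-2))

/-- the approximating network -/
def net : DNN where
  L := 2*d - 2
  ℓ := lfun d m N
  W := fun k => Matrix.of fun i j => wfun d m N dims k i.1 j.1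
  b := fun k i => bfun d m N dims k i.1

/-- the state after step `t`: slots `≤ t` updated, others raw -/
def sfun (x : ℕ → ℝ) (t j : ℕ) : ℝ := if j ≤ t then ZZ m N dims x j else x j

variable {d m N dims}

lemma lfun_zero : lfun d m N 0 = d := rfl

lemma lfun_A (hd2 : 2 ≤ d) {t : ℕ} (ht : t ≤ d - 2) : lfun d m N (2*t+1) = d + 4 := by
  unfold lfun
  have h1 : ¬(2*t+1 = 0) := by omega
  have h2 : ¬(2*t+1 = 2*d-1) := by omega
  have h3 : (2*t+1) % 2 = 1 := by omega
  simp [h1, h2, h3]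

lemma lfun_B (hd2 : 2 ≤ d) {t : ℕ} (ht : t ≤ d - 2) : lfun d m N (2*t+2) = d + 2*N := by
  unfold lfun
  have h1 : ¬(2*t+2 = 0) := by omega
  have h2 : ¬(2*t+2 = 2*d-1) := by omega
  have h3 : ¬((2*t+2) % 2 = 1) := by omega
  simp [h1, h2, h3]

lemma lfun_out (hd2 : 2 ≤ d) : lfun d m N (2*d-1) = m := by
  unfold lfun
  have h1 : ¬(2*d-1 = 0) := by omega
  simp [h1]

end Net
/-! ### evaluation helpers -/

section Eval

variable {d m N : ℕ} {dims : Fin m → ℕ}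

lemma hidden_succ (Φ : DNN) (k : ℕ) (x : Fin (Φ.ℓ 0) → ℝ) (i : Fin (Φ.ℓ (k+1))) :
    Φ.hidden (k+1) x i = max (Φ.affine k (Φ.hidden k x) i) 0 := rfl

lemma sum_range_dlt {n : ℕ} (c : ℕ) (hc : c < n) (F : ℕ → ℝ) :
    ∑ j ∈ range n, dlt c j * F j = F c := by
  unfold dlt
  rw [Finset.sum_eq_single c]
  · simp
  · intro b _ hb; simp [hb]
  · intro h; exact absurd (Finset.mem_range.2 hc) h

lemma scoef_even (r : ℕ) : scoef d N (d + 2*r) = cw N r / 4 := by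
  unfold scoef
  have h1 : ¬(d + 2*r < d) := by omega
  have h2 : (d + 2*r - d) % 2 = 0 := by omega
  have h3 : (d + 2*r - d) / 2 = r := by omega
  simp [h1, h2, h3]

lemma scoef_odd (r : ℕ) : scoef d N (d + 2*r + 1) = -(cw N r / 4) := by
  unfold scoef
  have h1 : ¬(d + 2*r + 1 < d) := by omega
  have h2 : ¬((d + 2*r + 1 - d) % 2 = 0) := by omega
  have h3 : (d + 2*r + 1 - d) / 2 = r := by omega
  simp [h1, h2, h3]

lemma sum_range_scoef (F : ℕ → ℝ) :
    ∑ j ∈ range (d + 2*N), scoef d N j * F j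
      = ((∑ r ∈ range N, cw N r * F (d+2*r)) - ∑ r ∈ range N, cw N r * F (d+2*r+1)) / 4 := by
  rw [sum_range_add']
  have h1 : ∑ j ∈ range d, scoef d N j * F j = 0 :=
    Finset.sum_eq_zero fun j hj => by simp [scoef, Finset.mem_range.1 hj]
  rw [h1, zero_add, sum_range_two_mul]
  have h2 : ∀ r ∈ range N,
      scoef d N (d + 2*r) * F (d + 2*r) + scoef d N (d + (2*r+1)) * F (d + (2*r+1))
        = (cw N r * F (d+2*r) - cw N r * F (d+2*r+1)) / 4 := by
    intro r _
    have e : d + (2*r+1) = d + 2*r + 1 := by omega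
    rw [e, scoef_even, scoef_odd]
    ring
  calc ∑ r ∈ range N, (scoef d N (d + 2*r) * F (d + 2*r)
          + scoef d N (d + (2*r+1)) * F (d + (2*r+1)))
      = ∑ r ∈ range N, (cw N r * F (d+2*r) - cw N r * F (d+2*r+1)) / 4 :=
        Finset.sum_congr rfl h2
    _ = ((∑ r ∈ range N, cw N r * F (d+2*r)) - ∑ r ∈ range N, cw N r * F (d+2*r+1)) / 4 := by
        rw [← Finset.sum_div, Finset.sum_sub_distrib]

lemma fin_sum_ext {n : ℕ} (u : Fin n → ℝ) (w : ℕ → ℝ) :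
    ∑ j : Fin n, w j.1 * u j
      = ∑ j ∈ range n, w j * (if h : j < n then u ⟨j, h⟩ else 0) := by
  rw [← Fin.sum_univ_eq_sum_range (fun j => w j * (if h : j < n then u ⟨j, h⟩ else 0)) n]
  refine Finset.sum_congr rfl fun j _ => ?_
  simp [j.2]

lemma relu_add_relu_neg (u : ℝ) : max u 0 + max (-u) 0 = |u| := by
  rcases le_total 0 u with h | h
  · rw [max_eq_left h, max_eq_right (by linarith), add_zero, abs_of_nonneg h]
  · rw [max_eq_right h, max_eq_left (by linarith), zero_add, abs_of_nonpos h]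

end Eval
/-! ### layer value descriptions and transitions -/

section Trans

variable {d m N : ℕ} {dims : Fin m → ℕ}

variable (d m N dims) in
/-- hidden values at an A-layer (prep layer of step `t`) -/
def AVal (x : ℕ → ℝ) (t j : ℕ) : ℝ :=
  if j < d then sfun m N dims x t j + 2
  else if j = d then max (ZZ m N dims x t + x (t+1)) 0
  else if j = d+1 then max (-(ZZ m N dims x t) - x (t+1)) 0
  else if j = d+2 then max (ZZ m N dims x t - x (t+1)) 0
  else max (x (t+1) - ZZ m N dims x t) 0

variable (d m N dims) in
/-- hidden values at a B-layer (s-layer of step `t`) -/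
def BVal (x : ℕ → ℝ) (t j : ℕ) : ℝ :=
  if j < d then sfun m N dims x t j + 2
  else if (j - d) % 2 = 0 then max (|ZZ m N dims x t + x (t+1)| - gt N ((j-d)/2)) 0
  else max (|ZZ m N dims x t - x (t+1)| - gt N ((j-d)/2)) 0

lemma sfun_zero (x : ℕ → ℝ) (j : ℕ) : sfun m N dims x 0 j = x j := by
  unfold sfun
  split_ifs with h
  · have : j = 0 := by omega
    subst this; rfl
  · rfl

lemma sfun_abs (x : ℕ → ℝ) (hx : ∀ j, |x j| ≤ 1)
    (hZ : ∀ j, j < d → |ZZ m N dims x j| ≤ 2) (t : ℕ) {j : ℕ} (hj : j < d) :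
    |sfun m N dims x t j| ≤ 2 := by
  unfold sfun
  split_ifs with h
  · exact hZ j hj
  · exact (hx j).trans one_le_two

lemma trans_A0 (hd2 : 2 ≤ d) (x : ℕ → ℝ) (hx : ∀ j, |x j| ≤ 1)
    (xin : Fin (lfun d m N 0) → ℝ) (hxin : ∀ j, xin j = x j.1) :
    ∀ i : Fin (lfun d m N (2*0+1)),
      (net d m N dims).hidden (2*0+1) xin i = AVal d m N dims x 0 i.1 := by
  intro i
  have hiw : i.1 < d + 4 := lt_of_lt_of_eq i.2 (lfun_A hd2 (by omega))
  show max ((∑ j : Fin (lfun d m N 0), wfun d m N dims 0 i.1 j.1 * xin j)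
      + bfun d m N dims 0 i.1) 0 = AVal d m N dims x 0 i.1
  rw [fin_sum_ext xin (wfun d m N dims 0 i.1)]
  have hrw : ∀ j ∈ range (lfun d m N 0),
      wfun d m N dims 0 i.1 j * (if h : j < lfun d m N 0 then xin ⟨j, h⟩ else 0)
        = wfun d m N dims 0 i.1 j * x j := by
    intro j hj
    rw [dif_pos (Finset.mem_range.1 hj), hxin]
  rw [Finset.sum_congr rfl hrw]
  rw [show lfun d m N 0 = d from rfl]
  rcases lt_or_ge i.1 d with h | h
  · have hw : ∀ j ∈ range d, wfun d m N dims 0 i.1 j * x j = dlt i.1 j * x j := by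
      intro j _
      have : wfun d m N dims 0 i.1 j = dlt i.1 j := by simp [wfun, h]
      rw [this]
    rw [Finset.sum_congr rfl hw, sum_range_dlt i.1 h]
    have hb : bfun d m N dims 0 i.1 = 2 := by simp [bfun, h]
    rw [hb]
    have hAv : AVal d m N dims x 0 i.1 = sfun m N dims x 0 i.1 + 2 := by simp [AVal, h]
    rw [hAv, sfun_zero, max_eq_left]
    have := abs_le.1 (hx i.1)
    linarith
  · have hnl : ¬ (i.1 < d) := by omega
    have hA0 : ZZ m N dims x 0 = x 0 := rfl
    have hb : bfun d m N dims 0 i.1 = 0 := by simp [bfun, hnl]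
    rw [hb, add_zero]
    rcases (by omega : i.1 = d ∨ i.1 = d+1 ∨ i.1 = d+2 ∨ i.1 = d+3) with h1 | h1 | h1 | h1
    · have hw : ∀ j ∈ range d, wfun d m N dims 0 i.1 j * x j
          = dlt 0 j * x j + dlt 1 j * x j := by
        intro j _
        have : wfun d m N dims 0 i.1 j = dlt 0 j + dlt 1 j := by simp [wfun, hnl, h1]
        rw [this, add_mul]
      rw [Finset.sum_congr rfl hw, Finset.sum_add_distrib,
        sum_range_dlt 0 (by omega), sum_range_dlt 1 (by omega)]
      simp [AVal, hnl, h1, hA0]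
    · have hw : ∀ j ∈ range d, wfun d m N dims 0 i.1 j * x j
          = -(dlt 0 j * x j + dlt 1 j * x j) := by
        intro j _
        have : wfun d m N dims 0 i.1 j = -(dlt 0 j + dlt 1 j) := by simp [wfun, hnl, h1]
        rw [this]; ring
      rw [Finset.sum_congr rfl hw, Finset.sum_neg_distrib, Finset.sum_add_distrib,
        sum_range_dlt 0 (by omega), sum_range_dlt 1 (by omega)]
      have e : -(x 0 + x 1) = -(x 0) - x 1 := by ring
      rw [e]
      simp [AVal, hnl, h1, hA0]
    · have hw : ∀ j ∈ range d, wfun d m N dims 0 i.1 j * x j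
          = dlt 0 j * x j - dlt 1 j * x j := by
        intro j _
        have : wfun d m N dims 0 i.1 j = dlt 0 j - dlt 1 j := by simp [wfun, hnl, h1]
        rw [this, sub_mul]
      rw [Finset.sum_congr rfl hw, Finset.sum_sub_distrib,
        sum_range_dlt 0 (by omega), sum_range_dlt 1 (by omega)]
      simp [AVal, hnl, h1, hA0]
    · have hw : ∀ j ∈ range d, wfun d m N dims 0 i.1 j * x j
          = dlt 1 j * x j - dlt 0 j * x j := by
        intro j _
        have : wfun d m N dims 0 i.1 j = dlt 1 j - dlt 0 j := by
          simp [wfun, hnl, h1]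
        rw [this, sub_mul]
      rw [Finset.sum_congr rfl hw, Finset.sum_sub_distrib,
        sum_range_dlt 0 (by omega), sum_range_dlt 1 (by omega)]
      simp [AVal, hnl, h1, hA0]

end Trans
section Trans2

variable {d m N : ℕ} {dims : Fin m → ℕ}

lemma trans_B (hd2 : 2 ≤ d) (x : ℕ → ℝ) (hx : ∀ j, |x j| ≤ 1)
    (hZ : ∀ j, j < d → |ZZ m N dims x j| ≤ 2)
    (xin : Fin (lfun d m N 0) → ℝ) (t : ℕ) (ht : t ≤ d - 2)
    (hA : ∀ i : Fin (lfun d m N (2*t+1)),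
      (net d m N dims).hidden (2*t+1) xin i = AVal d m N dims x t i.1) :
    ∀ i : Fin (lfun d m N (2*t+1+1)),
      (net d m N dims).hidden (2*t+1+1) xin i = BVal d m N dims x t i.1 := by
  intro i
  have hiw : i.1 < d + 2*N := lt_of_lt_of_eq (i.2 : i.1 < lfun d m N (2*t+2)) (lfun_B hd2 ht)
  show max ((∑ j : Fin (lfun d m N (2*t+1)),
      wfun d m N dims (2*t+1) i.1 j.1 * (net d m N dims).hidden (2*t+1) xin j)
      + bfun d m N dims (2*t+1) i.1) 0 = BVal d m N dims x t i.1
  have hfse := fin_sum_ext (n := lfun d m N (2*t+1))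
    ((net d m N dims).hidden (2*t+1) xin) (wfun d m N dims (2*t+1) i.1)
  rw [hfse]
  have hrw : ∀ j ∈ range (lfun d m N (2*t+1)),
      wfun d m N dims (2*t+1) i.1 j
        * (if h : j < lfun d m N (2*t+1) then (net d m N dims).hidden (2*t+1) xin ⟨j, h⟩ else 0)
        = wfun d m N dims (2*t+1) i.1 j * AVal d m N dims x t j := by
    intro j hj
    rw [dif_pos (Finset.mem_range.1 hj)]; exact congrArg _ (hA ⟨j, _⟩)
  erw [Finset.sum_congr rfl hrw]; rw [lfun_A hd2 ht]
  have h0 : ¬(2*t+1 = 0) := by omega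
  have h1 : (2*t+1) % 2 = 1 := by omega
  rcases lt_or_ge i.1 d with h | h
  · have hw : ∀ j ∈ range (d+4), wfun d m N dims (2*t+1) i.1 j * AVal d m N dims x t j
        = dlt i.1 j * AVal d m N dims x t j := by
      intro j _
      have : wfun d m N dims (2*t+1) i.1 j = dlt i.1 j := by simp [wfun, h0, h1, h]
      rw [this]
    rw [Finset.sum_congr rfl hw, sum_range_dlt i.1 (by omega)]
    have hb : bfun d m N dims (2*t+1) i.1 = 0 := by simp [bfun, h0, h1, h]
    rw [hb, add_zero]
    have hAv : AVal d m N dims x t i.1 = sfun m N dims x t i.1 + 2 := by simp [AVal, h]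
    have hBv : BVal d m N dims x t i.1 = sfun m N dims x t i.1 + 2 := by simp [BVal, h]
    rw [hAv, hBv, max_eq_left]
    have := abs_le.1 (sfun_abs x hx hZ t h)
    linarith
  · have hnl : ¬ (i.1 < d) := by omega
    have hb : bfun d m N dims (2*t+1) i.1 = - gt N ((i.1-d)/2) := by
      simp [bfun, h0, h1, hnl]
    have hAd : AVal d m N dims x t d = max (ZZ m N dims x t + x (t+1)) 0 := by
      simp [AVal]
    have hAd1 : AVal d m N dims x t (d+1) = max (-(ZZ m N dims x t) - x (t+1)) 0 := by
      have : ¬(d+1 < d) := by omega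
      simp [AVal, this]
    have hAd2 : AVal d m N dims x t (d+2) = max (ZZ m N dims x t - x (t+1)) 0 := by
      have e1 : ¬(d+2 < d) := by omega
      have e2 : ¬(d+2 = d) := by omega
      have e3 : ¬(d+2 = d+1) := by omega
      simp [AVal, e1, e2, e3]
    have hAd3 : AVal d m N dims x t (d+3) = max (x (t+1) - ZZ m N dims x t) 0 := by
      have e1 : ¬(d+3 < d) := by omega
      have e2 : ¬(d+3 = d) := by omega
      have e3 : ¬(d+3 = d+1) := by omega
      have e4 : ¬(d+3 = d+2) := by omega
      simp [AVal, e1, e2, e3, e4]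
    rcases Nat.even_or_odd (i.1 - d) with he | he
    · have he' : (i.1 - d) % 2 = 0 := Nat.even_iff.1 he
      have hw : ∀ j ∈ range (d+4), wfun d m N dims (2*t+1) i.1 j * AVal d m N dims x t j
          = dlt d j * AVal d m N dims x t j + dlt (d+1) j * AVal d m N dims x t j := by
        intro j _
        have : wfun d m N dims (2*t+1) i.1 j = dlt d j + dlt (d+1) j := by
          simp [wfun, h0, h1, hnl, he']
        rw [this, add_mul]
      rw [Finset.sum_congr rfl hw, Finset.sum_add_distrib,
        sum_range_dlt d (by omega), sum_range_dlt (d+1) (by omega), hAd, hAd1, hb]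
      have e : -(ZZ m N dims x t) - x (t+1) = -(ZZ m N dims x t + x (t+1)) := by ring
      rw [e, relu_add_relu_neg]
      have hBv : BVal d m N dims x t i.1
          = max (|ZZ m N dims x t + x (t+1)| - gt N ((i.1-d)/2)) 0 := by
        simp [BVal, hnl, he']
      rw [hBv]
      congr 1 <;> ring
    · have he' : ¬((i.1 - d) % 2 = 0) := by
        rw [Nat.odd_iff] at he; omega
      have hw : ∀ j ∈ range (d+4), wfun d m N dims (2*t+1) i.1 j * AVal d m N dims x t j
          = dlt (d+2) j * AVal d m N dims x t j + dlt (d+3) j * AVal d m N dims x t j := by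
        intro j _
        have : wfun d m N dims (2*t+1) i.1 j = dlt (d+2) j + dlt (d+3) j := by
          simp [wfun, h0, h1, hnl, he']
        rw [this, add_mul]
      rw [Finset.sum_congr rfl hw, Finset.sum_add_distrib,
        sum_range_dlt (d+2) (by omega), sum_range_dlt (d+3) (by omega), hAd2, hAd3, hb]
      have e : x (t+1) - ZZ m N dims x t = -(ZZ m N dims x t - x (t+1)) := by ring
      rw [e, relu_add_relu_neg]
      have hBv : BVal d m N dims x t i.1
          = max (|ZZ m N dims x t - x (t+1)| - gt N ((i.1-d)/2)) 0 := by
        simp [BVal, hnl, he']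
      rw [hBv]
      congr 1 <;> ring

end Trans2
section Trans3

variable {d m N : ℕ} {dims : Fin m → ℕ}

lemma sfun_ne (x : ℕ → ℝ) {t j : ℕ} (h : j ≠ t+1) :
    sfun m N dims x (t+1) j = sfun m N dims x t j := by
  unfold sfun
  rcases le_or_gt j t with h1 | h1
  · rw [if_pos h1, if_pos (by omega)]
  · rw [if_neg (by omega), if_neg (by omega)]

lemma sfun_self (x : ℕ → ℝ) (t : ℕ) : sfun m N dims x t t = ZZ m N dims x t := by
  unfold sfun; rw [if_pos le_rfl]

lemma sfun_gt (x : ℕ → ℝ) {t j : ℕ} (h : t < j) : sfun m N dims x t j = x j := by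
  unfold sfun; rw [if_neg (by omega)]

lemma trans_A_succ (hd2 : 2 ≤ d) (hN : 0 < N) (x : ℕ → ℝ) (hx : ∀ j, |x j| ≤ 1)
    (hZ : ∀ j, j < d → |ZZ m N dims x j| ≤ 2)
    (xin : Fin (lfun d m N 0) → ℝ) (t : ℕ) (ht : t + 1 ≤ d - 2)
    (hB : ∀ i : Fin (lfun d m N (2*t+1+1)),
      (net d m N dims).hidden (2*t+1+1) xin i = BVal d m N dims x t i.1) :
    ∀ i : Fin (lfun d m N (2*(t+1)+1)),
      (net d m N dims).hidden (2*(t+1)+1) xin i = AVal d m N dims x (t+1) i.1 := by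
  intro i
  have hiw : i.1 < d + 4 := lt_of_lt_of_eq (i.2 : i.1 < lfun d m N (2*(t+1)+1))
    (lfun_A hd2 (by omega))
  have h0 : ¬(2*t+1+1 = 0) := by omega
  have hpar : ¬((2*t+1+1) % 2 = 1) := by omega
  have hfin : ¬(2*t+1+1 = 2*d - 2) := by omega
  have hdiv : (2*t+1+1)/2 = t+1 := by omega
  have ht1d : t + 1 < d := by omega
  have ht2d : t + 2 < d := by omega
  show max ((∑ j : Fin (lfun d m N (2*t+1+1)),
      wfun d m N dims (2*t+1+1) i.1 j.1 * (net d m N dims).hidden (2*t+1+1) xin j)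
      + bfun d m N dims (2*t+1+1) i.1) 0 = AVal d m N dims x (t+1) i.1
  have hfse := fin_sum_ext (n := lfun d m N (2*t+1+1))
    ((net d m N dims).hidden (2*t+1+1) xin) (wfun d m N dims (2*t+1+1) i.1)
  rw [hfse]
  have hrw : ∀ j ∈ range (lfun d m N (2*t+1+1)),
      wfun d m N dims (2*t+1+1) i.1 j
        * (if h : j < lfun d m N (2*t+1+1) then (net d m N dims).hidden (2*t+1+1) xin ⟨j, h⟩ else 0)
        = wfun d m N dims (2*t+1+1) i.1 j * BVal d m N dims x t j := by
    intro j hj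
    rw [dif_pos (Finset.mem_range.1 hj)]; exact congrArg _ (hB ⟨j, _⟩)
  erw [Finset.sum_congr rfl hrw]; rw [lfun_B hd2 (by omega)]
  -- the key sub-sum giving the updated slot value
  have harow : (∑ j ∈ range (d+2*N), arow d m N dims (t+1) j * BVal d m N dims x t j)
      + abias m dims (t+1) = ZZ m N dims x (t+1) := by
    by_cases hst : bIsStart m dims (t+1)
    · have hw : ∀ j ∈ range (d+2*N), arow d m N dims (t+1) j * BVal d m N dims x t j
          = dlt (t+1) j * BVal d m N dims x t j := by
        intro j _; rw [show arow d m N dims (t+1) j = dlt (t+1) j from by simp [arow, hst]]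
      rw [Finset.sum_congr rfl hw, sum_range_dlt (t+1) (by omega)]
      have hBv : BVal d m N dims x t (t+1) = x (t+1) + 2 := by
        have := sfun_gt (m:=m) (N:=N) (dims:=dims) x (lt_add_one t)
        simp [BVal, ht1d, this]
      rw [hBv, show abias m dims (t+1) = -2 from by simp [abias, hst],
        ZZ_start x hst]
      ring
    · have hw : ∀ j ∈ range (d+2*N), arow d m N dims (t+1) j * BVal d m N dims x t j
          = scoef d N j * BVal d m N dims x t j := by
        intro j _; rw [show arow d m N dims (t+1) j = scoef d N j from by simp [arow, hst]]
      rw [Finset.sum_congr rfl hw, sum_range_scoef]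
      have hev : ∀ r ∈ range N, cw N r * BVal d m N dims x t (d+2*r)
          = cw N r * max (|ZZ m N dims x t + x (t+1)| - gt N r) 0 := by
        intro r _
        have e1 : ¬(d+2*r < d) := by omega
        have e2 : (d+2*r - d) % 2 = 0 := by omega
        have e3 : (d+2*r - d)/2 = r := by omega
        rw [show BVal d m N dims x t (d+2*r)
          = max (|ZZ m N dims x t + x (t+1)| - gt N r) 0 from by simp [BVal, e1, e2, e3]]
      have hod : ∀ r ∈ range N, cw N r * BVal d m N dims x t (d+2*r+1)
          = cw N r * max (|ZZ m N dims x t - x (t+1)| - gt N r) 0 := by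
        intro r _
        have e1 : ¬(d+2*r+1 < d) := by omega
        have e2 : ¬((d+2*r+1 - d) % 2 = 0) := by omega
        have e3 : (d+2*r+1 - d)/2 = r := by omega
        rw [show BVal d m N dims x t (d+2*r+1)
          = max (|ZZ m N dims x t - x (t+1)| - gt N r) 0 from by simp [BVal, e1, e2, e3]]
      rw [Finset.sum_congr rfl hev, Finset.sum_congr rfl hod]
      have hI1 : ∑ r ∈ range N, cw N r * max (|ZZ m N dims x t + x (t+1)| - gt N r) 0
          = Ifun N |ZZ m N dims x t + x (t+1)| := rfl
      have hI2 : ∑ r ∈ range N, cw N r * max (|ZZ m N dims x t - x (t+1)| - gt N r) 0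
          = Ifun N |ZZ m N dims x t - x (t+1)| := rfl
      rw [hI1, hI2, show abias m dims (t+1) = 0 from by simp [abias, hst], add_zero]
      rw [ZZ_step x hst]
      rfl
  set S := ∑ j ∈ range (d+2*N), arow d m N dims (t+1) j * BVal d m N dims x t j with hS
  have hBt2 : BVal d m N dims x t (t+2) = x (t+2) + 2 := by
    have := sfun_gt (m:=m) (N:=N) (dims:=dims) x (show t < t+2 by omega)
    simp [BVal, ht2d, this]
  rcases lt_or_ge i.1 d with h | h
  · by_cases hit : i.1 = t+1
    · have hw : ∀ j ∈ range (d+2*N), wfun d m N dims (2*t+1+1) i.1 j * BVal d m N dims x t j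
          = arow d m N dims (t+1) j * BVal d m N dims x t j := by
        intro j _
        rw [show wfun d m N dims (2*t+1+1) i.1 j = arow d m N dims (t+1) j from by
          simp [wfun, h0, hpar, hfin, hdiv, h, hit, ht1d]]
      rw [Finset.sum_congr rfl hw, ← hS]
      rw [show bfun d m N dims (2*t+1+1) i.1 = abias m dims (t+1) + 2 from by
        simp [bfun, h0, hpar, hfin, hdiv, h, hit, ht1d]]
      have hval : S + (abias m dims (t+1) + 2) = ZZ m N dims x (t+1) + 2 := by
        rw [← add_assoc, harow]
      rw [hval, max_eq_left (by linarith [abs_le.1 (hZ (t+1) ht1d)])]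
      have : AVal d m N dims x (t+1) i.1 = sfun m N dims x (t+1) i.1 + 2 := by
        simp [AVal, h]
      rw [this, hit, sfun_self]
    · have hw : ∀ j ∈ range (d+2*N), wfun d m N dims (2*t+1+1) i.1 j * BVal d m N dims x t j
          = dlt i.1 j * BVal d m N dims x t j := by
        intro j _
        rw [show wfun d m N dims (2*t+1+1) i.1 j = dlt i.1 j from by
          simp [wfun, h0, hpar, hfin, hdiv, h, hit, ht1d]]
      rw [Finset.sum_congr rfl hw, sum_range_dlt i.1 (by omega)]
      rw [show bfun d m N dims (2*t+1+1) i.1 = 0 from by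
        simp [bfun, h0, hpar, hfin, hdiv, h, hit, ht1d]]
      have hBv : BVal d m N dims x t i.1 = sfun m N dims x t i.1 + 2 := by simp [BVal, h]
      have hAv : AVal d m N dims x (t+1) i.1 = sfun m N dims x (t+1) i.1 + 2 := by
        simp [AVal, h]
      rw [hBv, hAv, add_zero, sfun_ne x hit, max_eq_left]
      have := abs_le.1 (sfun_abs x hx hZ t h)
      linarith
  · have hnl : ¬ (i.1 < d) := by omega
    have hZ1 : ZZ m N dims x (t+1) + 2 ≥ 0 := by linarith [abs_le.1 (hZ (t+1) ht1d)]
    have hsplit : ∀ (c₁ c₂ : ℝ) (w : ℕ → ℝ),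
        (∀ j ∈ range (d+2*N), w j = c₁ * arow d m N dims (t+1) j + c₂ * dlt (t+2) j) →
        ∑ j ∈ range (d+2*N), w j * BVal d m N dims x t j
          = c₁ * S + c₂ * (x (t+2) + 2) := by
      intro c₁ c₂ w hw
      have : ∀ j ∈ range (d+2*N), w j * BVal d m N dims x t j
          = c₁ * (arow d m N dims (t+1) j * BVal d m N dims x t j)
            + c₂ * (dlt (t+2) j * BVal d m N dims x t j) := by
        intro j hj; rw [hw j hj]; ring
      rw [Finset.sum_congr rfl this, Finset.sum_add_distrib, ← Finset.mul_sum, ← Finset.mul_sum,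
        sum_range_dlt (t+2) (by omega), hBt2, ← hS]
    have hxt2 : t + 1 + 1 = t + 2 := rfl
    rcases (by omega : i.1 = d ∨ i.1 = d+1 ∨ i.1 = d+2 ∨ i.1 = d+3) with h1 | h1 | h1 | h1
    · rw [hsplit 1 1 _ (fun j _ => by
        rw [show wfun d m N dims (2*t+1+1) i.1 j = arow d m N dims (t+1) j + dlt (t+2) j from by
          simp [wfun, h0, hpar, hfin, hdiv, hnl, h1]]; ring)]
      rw [show bfun d m N dims (2*t+1+1) i.1 = abias m dims (t+1) + (-2) from by
        simp [bfun, h0, hpar, hfin, hdiv, hnl, h1]]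
      have : AVal d m N dims x (t+1) i.1
          = max (ZZ m N dims x (t+1) + x (t+2)) 0 := by
        simp [AVal, hnl, h1, hxt2]
      rw [this]
      congr 1
      linarith [harow]
    · rw [hsplit (-1) (-1) _ (fun j _ => by
        rw [show wfun d m N dims (2*t+1+1) i.1 j
          = -(arow d m N dims (t+1) j) - dlt (t+2) j from by
          simp [wfun, h0, hpar, hfin, hdiv, hnl, h1]]; ring)]
      rw [show bfun d m N dims (2*t+1+1) i.1 = -(abias m dims (t+1)) + 2 from by
        simp [bfun, h0, hpar, hfin, hdiv, hnl, h1]]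
      have : AVal d m N dims x (t+1) i.1
          = max (-(ZZ m N dims x (t+1)) - x (t+2)) 0 := by
        have e1 : ¬(d+1 < d) := by omega
        have e2 : ¬(d+1 = d) := by omega
        simp [AVal, h1, e1, e2, hxt2]
      rw [this]
      congr 1
      linarith [harow]
    · rw [hsplit 1 (-1) _ (fun j _ => by
        rw [show wfun d m N dims (2*t+1+1) i.1 j
          = arow d m N dims (t+1) j - dlt (t+2) j from by
          simp [wfun, h0, hpar, hfin, hdiv, hnl, h1]]; ring)]
      rw [show bfun d m N dims (2*t+1+1) i.1 = abias m dims (t+1) + 2 from by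
        simp [bfun, h0, hpar, hfin, hdiv, hnl, h1]]
      have : AVal d m N dims x (t+1) i.1
          = max (ZZ m N dims x (t+1) - x (t+2)) 0 := by
        have e1 : ¬(d+2 < d) := by omega
        have e2 : ¬(d+2 = d) := by omega
        have e3 : ¬(d+2 = d+1) := by omega
        simp [AVal, h1, e1, e2, e3, hxt2]
      rw [this]
      congr 1
      linarith [harow]
    · rw [hsplit (-1) 1 _ (fun j _ => by
        rw [show wfun d m N dims (2*t+1+1) i.1 j
          = dlt (t+2) j - arow d m N dims (t+1) j from by
          simp [wfun, h0, hpar, hfin, hdiv, hnl, h1]]; ring)]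
      rw [show bfun d m N dims (2*t+1+1) i.1 = -(abias m dims (t+1)) + (-2) from by
        simp [bfun, h0, hpar, hfin, hdiv, hnl, h1]]
      have : AVal d m N dims x (t+1) i.1
          = max (x (t+2) - ZZ m N dims x (t+1)) 0 := by
        have e1 : ¬(d+3 < d) := by omega
        have e2 : ¬(d+3 = d) := by omega
        have e3 : ¬(d+3 = d+1) := by omega
        have e4 : ¬(d+3 = d+2) := by omega
        simp [AVal, h1, e1, e2, e3, e4, hxt2]
      rw [this]
      congr 1
      linarith [harow]

end Trans3
section Spec

variable {d m N : ℕ} {dims : Fin m → ℕ}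

lemma hidden_spec (hd2 : 2 ≤ d) (hN : 0 < N) (x : ℕ → ℝ) (hx : ∀ j, |x j| ≤ 1)
    (hZ : ∀ j, j < d → |ZZ m N dims x j| ≤ 2)
    (xin : Fin (lfun d m N 0) → ℝ) (hxin : ∀ j, xin j = x j.1) :
    ∀ t, t ≤ d - 2 →
      (∀ i : Fin (lfun d m N (2*t+1)),
        (net d m N dims).hidden (2*t+1) xin i = AVal d m N dims x t i.1) ∧
      (∀ i : Fin (lfun d m N (2*t+1+1)),
        (net d m N dims).hidden (2*t+1+1) xin i = BVal d m N dims x t i.1) := by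
  intro t
  induction t with
  | zero =>
    intro ht
    have hA := trans_A0 (dims:=dims) hd2 x hx xin hxin
    exact ⟨hA, trans_B hd2 x hx hZ xin 0 ht hA⟩
  | succ t ih =>
    intro ht
    have ihB := (ih (by omega)).2
    have hA := trans_A_succ hd2 hN x hx hZ xin t ht ihB
    exact ⟨hA, trans_B hd2 x hx hZ xin (t+1) ht hA⟩

lemma lfun_L (hd2 : 2 ≤ d) : lfun d m N (2*d-2) = d + 2*N := by
  unfold lfun
  have h1 : ¬(2*d-2 = 0) := by omega
  have h2 : ¬(2*d-2 = 2*d-1) := by omega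
  have h3 : ¬((2*d-2) % 2 = 1) := by omega
  simp [h1, h2, h3]

lemma lfun_L1 (hd2 : 2 ≤ d) : lfun d m N (2*d-2+1) = m := by
  unfold lfun
  have h1 : ¬(2*d-2+1 = 0) := by omega
  have h2 : 2*d-2+1 = 2*d-1 := by omega
  have h3 : ¬(2*d-1 = 0) := by omega
  simp [h1, h2, h3]

lemma scoef_sum_BVal (x : ℕ → ℝ) (t : ℕ) :
    ∑ j ∈ range (d + 2*N), scoef d N j * BVal d m N dims x t j
      = Mt N (ZZ m N dims x t) (x (t+1)) := by
  rw [sum_range_scoef]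
  have hev : ∀ r ∈ range N, cw N r * BVal d m N dims x t (d+2*r)
      = cw N r * max (|ZZ m N dims x t + x (t+1)| - gt N r) 0 := by
    intro r _
    have e1 : ¬(d+2*r < d) := by omega
    have e2 : (d+2*r - d) % 2 = 0 := by omega
    have e3 : (d+2*r - d)/2 = r := by omega
    rw [show BVal d m N dims x t (d+2*r)
      = max (|ZZ m N dims x t + x (t+1)| - gt N r) 0 from by simp [BVal, e1, e2, e3]]
  have hod : ∀ r ∈ range N, cw N r * BVal d m N dims x t (d+2*r+1)
      = cw N r * max (|ZZ m N dims x t - x (t+1)| - gt N r) 0 := by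
    intro r _
    have e1 : ¬(d+2*r+1 < d) := by omega
    have e2 : ¬((d+2*r+1 - d) % 2 = 0) := by omega
    have e3 : (d+2*r+1 - d)/2 = r := by omega
    rw [show BVal d m N dims x t (d+2*r+1)
      = max (|ZZ m N dims x t - x (t+1)| - gt N r) 0 from by simp [BVal, e1, e2, e3]]
  rw [Finset.sum_congr rfl hev, Finset.sum_congr rfl hod]
  rfl

lemma realize_spec (hd2 : 2 ≤ d) (hN : 0 < N) (x : ℕ → ℝ) (hx : ∀ j, |x j| ≤ 1)
    (hZ : ∀ j, j < d → |ZZ m N dims x j| ≤ 2)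
    (xin : Fin (lfun d m N 0) → ℝ) (hxin : ∀ j, xin j = x j.1)
    (hsig : bsig m dims m = d) (hpos : ∀ i'' , i'' < m → 1 ≤ bdims m dims i'') :
    ∀ i : Fin (lfun d m N (2*d-2+1)),
      (net d m N dims).realize xin i = ZZ m N dims x (bend m dims i.1) := by
  have hB := (hidden_spec hd2 hN x hx hZ xin hxin (d-2) le_rfl).2
  rw [show 2*(d-2)+1+1 = 2*d-2 from by omega] at hB
  intro i
  have him : i.1 < m := lt_of_lt_of_eq i.2 (lfun_L1 hd2)
  have hbend : bend m dims i.1 < d := by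
    have h1 : bsig m dims (i.1+1) ≤ bsig m dims m := bsig_mono (by omega)
    have h2 := bsig_succ (m:=m) (dims:=dims) i.1
    have h3 := hpos i.1 him
    unfold bend
    omega
  have h0 : ¬(2*d-2 = 0) := by omega
  have hpar : ¬((2*d-2) % 2 = 1) := by omega
  show (∑ j : Fin (lfun d m N (2*d-2)),
      wfun d m N dims (2*d-2) i.1 j.1 * (net d m N dims).hidden (2*d-2) xin j)
      + bfun d m N dims (2*d-2) i.1 = ZZ m N dims x (bend m dims i.1)
  have hfse := fin_sum_ext (n := lfun d m N (2*d-2))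
    ((net d m N dims).hidden (2*d-2) xin) (wfun d m N dims (2*d-2) i.1)
  rw [hfse]
  have hrw : ∀ j ∈ range (lfun d m N (2*d-2)),
      wfun d m N dims (2*d-2) i.1 j
        * (if h : j < lfun d m N (2*d-2) then (net d m N dims).hidden (2*d-2) xin ⟨j, h⟩ else 0)
        = wfun d m N dims (2*d-2) i.1 j * BVal d m N dims x (d-2) j := by
    intro j hj
    rw [dif_pos (Finset.mem_range.1 hj)]; exact congrArg _ (hB ⟨j, _⟩)
  erw [Finset.sum_congr rfl hrw]; rw [lfun_L hd2]
  by_cases hc : bend m dims i.1 ≤ d - 2 ∨ bIsStart m dims (bend m dims i.1)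
  · have hw : ∀ j ∈ range (d+2*N),
        wfun d m N dims (2*d-2) i.1 j * BVal d m N dims x (d-2) j
          = dlt (bend m dims i.1) j * BVal d m N dims x (d-2) j := by
      intro j _
      rw [show wfun d m N dims (2*d-2) i.1 j = dlt (bend m dims i.1) j from by
        simp [wfun, h0, hpar, hc]]
    rw [Finset.sum_congr rfl hw, sum_range_dlt _ (by omega),
      show bfun d m N dims (2*d-2) i.1 = -2 from by simp [bfun, h0, hpar, hc]]
    have hBv : BVal d m N dims x (d-2) (bend m dims i.1)
        = sfun m N dims x (d-2) (bend m dims i.1) + 2 := by simp [BVal, hbend]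
    rw [hBv]
    by_cases hb2 : bend m dims i.1 ≤ d - 2
    · rw [show sfun m N dims x (d-2) (bend m dims i.1) = ZZ m N dims x (bend m dims i.1)
        from by unfold sfun; rw [if_pos hb2]]
      ring
    · have hst : bIsStart m dims (bend m dims i.1) := by tauto
      rw [sfun_gt x (by omega), ZZ_start x hst]
      ring
  · push_neg at hc
    obtain ⟨hc1, hc2⟩ := hc
    have hbe : bend m dims i.1 = d - 1 := by omega
    have hw : ∀ j ∈ range (d+2*N),
        wfun d m N dims (2*d-2) i.1 j * BVal d m N dims x (d-2) j
          = scoef d N j * BVal d m N dims x (d-2) j := by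
      intro j _
      rw [show wfun d m N dims (2*d-2) i.1 j = scoef d N j from by
        simp [wfun, h0, hpar, hc1, hc2]]
    rw [Finset.sum_congr rfl hw, scoef_sum_BVal,
      show bfun d m N dims (2*d-2) i.1 = 0 from by simp [bfun, h0, hpar, hc1, hc2], add_zero]
    have hd1 : d - 1 = (d-2) + 1 := by omega
    rw [hbe, hd1]
    rw [ZZ_step x (by rw [← hd1, ← hbe]; exact hc2)]
end Spec
section Params

variable {d m N : ℕ} {dims : Fin m → ℕ}

lemma net_params (hd2 : 2 ≤ d) (hm : m ≤ d) (hN2 : 2 ≤ N) :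
    (net d m N dims).params ≤ 2*d * ((d + 2*N) * (d + 5)) := by
  have hup : ∀ k', lfun d m N k' ≤ d + 2*N := by
    intro k'; unfold lfun; split_ifs <;> omega
  have hodd : ∀ k', k' % 2 = 1 → lfun d m N k' ≤ d + 4 := by
    intro k' h1; unfold lfun; split_ifs <;> omega
  have key : ∀ k ∈ range (2*d-2+1),
      lfun d m N (k+1) * (lfun d m N k + 1) ≤ (d + 2*N) * (d + 5) := by
    intro k hk
    have hk' : k ≤ 2*d-2 := by have := Finset.mem_range.1 hk; omega
    rcases Nat.even_or_odd k with he | ho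
    · have he' : k % 2 = 0 := Nat.even_iff.1 he
      have h1 : lfun d m N (k+1) ≤ d + 4 := hodd (k+1) (by omega)
      have h2 : lfun d m N k + 1 ≤ d + 2*N + 1 := by linarith [hup k]
      calc lfun d m N (k+1) * (lfun d m N k + 1) ≤ (d+4) * (d + 2*N + 1) :=
            Nat.mul_le_mul h1 h2
        _ ≤ (d + 2*N) * (d + 5) := by nlinarith
    · have ho' : k % 2 = 1 := Nat.odd_iff.1 ho
      have h1 : lfun d m N (k+1) ≤ d + 2*N := hup (k+1)
      have h2 : lfun d m N k + 1 ≤ d + 5 := by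
        have := hodd k ho'
        omega
      exact Nat.mul_le_mul h1 h2
  calc (net d m N dims).params
      ≤ ∑ _k ∈ range (2*d-2+1), (d + 2*N) * (d + 5) := Finset.sum_le_sum key
    _ = (2*d-2+1) * ((d + 2*N) * (d + 5)) := by
        rw [Finset.sum_const, Finset.card_range, smul_eq_mul]
    _ ≤ 2*d * ((d + 2*N) * (d + 5)) := Nat.mul_le_mul_right _ (by omega)

lemma bsig_total (hd : ∑ i, dims i = d) : bsig m dims m = d := by
  unfold bsig
  rw [← Fin.sum_univ_eq_sum_range (fun j => bdims m dims j) m]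
  rw [← hd]
  refine Finset.sum_congr rfl fun j _ => ?_
  unfold bdims
  rw [dif_pos j.2]

lemma filter_sum (i : Fin m) :
    ∑ j ∈ Finset.univ.filter (fun j => j < i), dims j = bsig m dims i.1 := by
  rw [Finset.sum_filter]
  have h1 : ∀ j : Fin m, (if j < i then dims j else 0)
      = (fun j' => if j' < i.1 then bdims m dims j' else 0) j.1 := by
    intro j
    simp only [Fin.lt_def]
    split_ifs with h
    · unfold bdims; rw [dif_pos j.2]
    · rfl
  rw [Finset.sum_congr rfl (fun j _ => h1 j),
    Fin.sum_univ_eq_sum_range (fun j' => if j' < i.1 then bdims m dims j' else 0) m]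
  rw [← Finset.sum_filter]
  have h2 : (range m).filter (fun j' => j' < i.1) = range i.1 := by
    ext a
    simp only [Finset.mem_filter, Finset.mem_range]
    have := i.2
    omega
  rw [h2]
  rfl

lemma block_decomp (hsig : bsig m dims m = d) :
    ∀ j, j < d → ∃ i l, i < m ∧ l < bdims m dims i ∧ j = bsig m dims i + l := by
  suffices h : ∀ K, K ≤ m → ∀ j, j < bsig m dims K →
      ∃ i l, i < m ∧ l < bdims m dims i ∧ j = bsig m dims i + l by
    intro j hj
    exact h m le_rfl j (by rwa [hsig])
  intro K
  induction K with
  | zero =>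
    intro _ j hj
    simp [bsig] at hj
  | succ K ih =>
    intro hKm j hj
    rw [bsig_succ] at hj
    rcases lt_or_ge j (bsig m dims K) with h | h
    · exact ih (by omega) j h
    · exact ⟨K, j - bsig m dims K, by omega, by omega, by omega⟩

end Params
end Cor37

open Cor37 Finset

set_option maxHeartbeats 1000000 in
/-- **Corollary 3.7**: approximation of parallelized product functions on `[-1,1]^d`
with Lipschitz constant `√32 d³` at cost `≤ K d^K ε⁻¹`. -/
theorem parallelized_product_approx :
    ∃ K : ℕ, 0 < K ∧
      ∀ d : ℕ, 0 < d → ∀ ε : ℝ, 0 < ε → ε ≤ 1 → ∀ p : ℝ≥0∞, 1 ≤ p →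
      ∀ (m : ℕ) (f : (Fin d → ℝ) → (Fin m → ℝ)),
        MemProdClass (-1) 1 f →
        Cost p (cube d (-1) 1) f (Real.sqrt 32 * (d : ℝ) ^ 3) ε ≤
          ENNReal.ofReal ((K : ℝ) * (d : ℝ) ^ K * ε⁻¹) := by
  classical
  refine ⟨1000, by norm_num, ?_⟩
  intro d hd ε hε hε1 p hp m f hf
  obtain ⟨dims, hdsum, hpos, hprod⟩ := hf
  have hεinv1 : (1:ℝ) ≤ ε⁻¹ := by
    nlinarith [inv_pos.2 hε, mul_inv_cancel₀ hε.ne']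
  have hεinv0 : (0:ℝ) < ε⁻¹ := inv_pos.2 hε
  have hm_le : m ≤ d := by
    rw [← hdsum]
    calc m = ∑ _i : Fin m, 1 := by simp
      _ ≤ ∑ i, dims i := Finset.sum_le_sum (fun i _ => hpos i)
  have hm0 : 0 < m := by
    by_contra h
    push_neg at h
    have hm : m = 0 := by omega
    subst hm
    simp at hdsum
    omega
  have hsqrt4 : (4:ℝ) ≤ Real.sqrt 32 := by
    have h16 : Real.sqrt 16 = 4 := by
      rw [show (16:ℝ) = 4^2 by norm_num, Real.sqrt_sq (by norm_num)]
    rw [← h16]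
    exact Real.sqrt_le_sqrt (by norm_num)
  have hofnat : ∀ n : ℕ, (n : ℝ≥0∞) = ENNReal.ofReal (n : ℝ) :=
    fun n => (ENNReal.ofReal_natCast n).symm
  rcases eq_or_lt_of_le (show 1 ≤ d from hd) with hd1 | hd2
  · -- the trivial case d = 1
    have hd1' : d = 1 := hd1.symm
    subst hd1'
    have hm1 : m = 1 := by omega
    subst hm1
    set Φ1 : DNN :=
      { L := 0, ℓ := fun _ => 1, W := fun _ => Matrix.of fun _ _ => 1,
        b := fun _ _ => 0 } with hΦ1
    have hmΦ : Φ1.ℓ 0 = 1 := rfl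
    have hnΦ : Φ1.ℓ (Φ1.L + 1) = 1 := rfl
    set g : (Fin 1 → ℝ) → (Fin 1 → ℝ) :=
      fun x i => Φ1.realize (fun j => x (Fin.cast hmΦ j)) (Fin.cast hnΦ.symm i) with hgdef
    have hReal : Φ1.Realizes g := ⟨hmΦ, hnΦ, fun x i => rfl⟩
    have hg : ∀ (x : Fin 1 → ℝ) (i : Fin 1), g x i = x 0 := by
      intro x i
      show (∑ j : Fin 1, Matrix.of (fun (_ : Fin 1) (_ : Fin 1) => (1:ℝ)) _ j
        * x (Fin.cast hmΦ j)) + 0 = x 0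
      simp [Matrix.of_apply]
    have hfx : ∀ x ∈ cube 1 (-1) 1, ∀ i : Fin 1, f x i = x 0 := by
      intro x hx i
      rw [hprod x hx i]
      have hdims : dims i = 1 := by
        have h1 : ∑ i', dims i' = dims i := by
          rw [show i = 0 from Subsingleton.elim i 0]
          simp
      
        omega
      have hfac : ∀ l : Fin (dims i),
          x (Fin.cast hdsum (blockIdx dims i l)) = x 0 := by
        intro l
        congr 1
        exact Subsingleton.elim _ _
      calc ∏ l : Fin (dims i), x (Fin.cast hdsum (blockIdx dims i l))
          = ∏ _l : Fin (dims i), x 0 := Finset.prod_congr rfl (fun l _ => hfac l)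
        _ = (x 0) ^ (dims i) := by rw [Finset.prod_const]; simp
        _ = x 0 := by rw [hdims, pow_one]
    refine le_trans (sInf_le (a := (Φ1.params : ℝ≥0∞)) ?_) ?_
    · refine ⟨Φ1, g, hReal, rfl, ?_, ?_⟩
      · intro x hx
        have hz : ∀ i : Fin 1, |(g x - f x) i| ≤ 0 := by
          intro i
          simp [Pi.sub_apply, hg x i, hfx x hx i]
        calc lpNorm p (g x - f x) ≤ ((1:ℕ):ℝ) * 0 := lpNorm_le hp one_pos _ le_rfl hz
          _ ≤ ε := by norm_num; linarith
      · intro x hx y hy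
        have hz : ∀ i : Fin 1, |(g x - g y) i| ≤ lpNorm p (x - y) := by
          intro i
          rw [Pi.sub_apply, hg x i, hg y i]
          have h1 := coord_le_lpNorm hp (x - y) 0
          rwa [Pi.sub_apply] at h1
        calc lpNorm p (g x - g y)
            ≤ ((1:ℕ):ℝ) * lpNorm p (x - y) :=
              lpNorm_le hp one_pos _ (lpNorm_nonneg p _) hz
          _ ≤ Real.sqrt 32 * ((1:ℕ):ℝ)^3 * lpNorm p (x - y) := by
              have h1 : ((1:ℕ):ℝ) ≤ Real.sqrt 32 * ((1:ℕ):ℝ)^3 := by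
                push_cast; nlinarith
              exact mul_le_mul_of_nonneg_right h1 (lpNorm_nonneg p _)
    · have hparams : Φ1.params = 2 := by
        simp [DNN.params, hΦ1]
      rw [hparams, hofnat 2]
      apply ENNReal.ofReal_le_ofReal
      push_cast
      nlinarith
  · -- the main case d ≥ 2
    have hd2' : 2 ≤ d := hd2
    set K0 := ⌈ε⁻¹⌉₊ with hK0def
    have hK01 : 1 ≤ K0 := Nat.one_le_ceil_iff.2 (by positivity)
    set N := 8*d^3*K0 with hNdef
    have hd3 : 1 ≤ d^3 := Nat.one_le_pow _ _ hd
    have hN : 0 < N := by positivity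
    have h44 : 2*2 ≤ d*d := Nat.mul_le_mul hd2' hd2'
    have h4d : 4*d ≤ d*d*d := by
      calc 4*d = (2*2)*d := by ring
        _ ≤ (d*d)*d := Nat.mul_le_mul h44 le_rfl
    have h8A : 8*(d*d*d) ≤ N := by
      calc 8*(d*d*d) = 8*d^3*1 := by ring
        _ ≤ 8*d^3*K0 := Nat.mul_le_mul le_rfl hK01
        _ = N := by rw [hNdef]
    have hN2 : 2 ≤ N := by linarith
    have hdN : d ≤ N := by nlinarith [h4d, h8A, hd2']
    have hbigN : 4*d + 5 ≤ N := by linarith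
    have hNR : (0:ℝ) < N := by exact_mod_cast hN
    have hNge : 8*(d:ℝ)^3*ε⁻¹ ≤ N := by
      have h1 : ε⁻¹ ≤ (K0:ℝ) := Nat.le_ceil _
      have h2 : (N:ℝ) = 8*(d:ℝ)^3*(K0:ℝ) := by rw [hNdef]; push_cast; ring
      rw [h2]
      have hd3R : (0:ℝ) < (d:ℝ)^3 := by positivity
      nlinarith
    have hsig : bsig m dims m = d := bsig_total hdsum
    have hbd_le : ∀ i'', i'' < m → bdims m dims i'' ≤ d := by
      intro i'' hi
      have h1 := bsig_succ (m:=m) (dims:=dims) i''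
      have h2 : bsig m dims (i''+1) ≤ bsig m dims m := bsig_mono (by omega)
      omega
    have hbd_pos : ∀ i'', i'' < m → 1 ≤ bdims m dims i'' := by
      intro i'' hi
      unfold bdims
      rw [dif_pos hi]
      exact hpos _
    set Φ := net d m N dims with hΦdef
    have hmΦ : Φ.ℓ 0 = d := rfl
    have hnΦ : Φ.ℓ (Φ.L + 1) = m := lfun_L1 hd2'
    set g : (Fin d → ℝ) → (Fin m → ℝ) :=
      fun x i => Φ.realize (fun j => x (Fin.cast hmΦ j)) (Fin.cast hnΦ.symm i) with hgdef
    have hReal : Φ.Realizes g := ⟨hmΦ, hnΦ, fun x i => rfl⟩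
    have habs1 : ∀ x ∈ cube d (-1) 1, ∀ j,
        |(fun j => if h : j < d then x ⟨j, h⟩ else 0) j| ≤ 1 := by
      intro x hx j
      simp only
      split_ifs with h
      · rw [abs_le]; exact ⟨hx.1 _, hx.2 _⟩
      · simp
    -- pointwise description of g on the cube
    have hkey : ∀ x ∈ cube d (-1) 1, ∀ i : Fin m,
        g x i = ZZ m N dims (fun j => if h : j < d then x ⟨j, h⟩ else 0)
          (bend m dims i.1) := by
      intro x hx i
      set x' : ℕ → ℝ := fun j => if h : j < d then x ⟨j, h⟩ else 0 with hx'def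
      have hx1 : ∀ j, |x' j| ≤ 1 := habs1 x hx
      have hZ2 : ∀ j, j < d → |ZZ m N dims x' j| ≤ 2 := by
        intro j hj
        obtain ⟨i'', l, him, hl, hjl⟩ := block_decomp hsig j hj
        have hdN' : bdims m dims i'' ≤ N := (hbd_le i'' him).trans hdN
        have h2 := (ZZ_err hN x' hx1 him hdN' l hl).2
        rw [← hjl] at h2
        have hlN : (l:ℝ)/N ≤ 1 := by
          rw [div_le_one hNR]
          exact_mod_cast le_trans (le_of_lt hl) hdN'
        linarith
      have hxin : ∀ j : Fin (lfun d m N 0),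
          (fun j => x (Fin.cast hmΦ j)) j = x' j.1 := by
        intro j
        rw [hx'def]
        simp only
        rw [dif_pos (show j.1 < d from j.2)]
        rfl
      have h3 := realize_spec hd2' hN x' hx1 hZ2 (fun j => x (Fin.cast hmΦ j)) hxin hsig
        hbd_pos (Fin.cast hnΦ.symm i)
      exact h3
    -- description of f on the cube
    have hfP : ∀ x ∈ cube d (-1) 1, ∀ i : Fin m,
        f x i = bP m dims (fun j => if h : j < d then x ⟨j, h⟩ else 0) i.1
          (bdims m dims i.1 - 1) := by
      intro x hx i
      set x' : ℕ → ℝ := fun j => if h : j < d then x ⟨j, h⟩ else 0 with hx'def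
      rw [hprod x hx i]
      have hbdi : bdims m dims i.1 = dims i := by
        unfold bdims
        rw [dif_pos i.2]
      have hfac : ∀ l : Fin (dims i),
          x (Fin.cast hdsum (blockIdx dims i l)) = x' (bsig m dims i.1 + l.1) := by
        intro l
        have hval : (blockIdx dims i l).1 = bsig m dims i.1 + l.1 := by
          show (∑ j ∈ Finset.univ.filter (fun j => j < i), dims j) + l.1 = _
          rw [filter_sum]
        have hlt : bsig m dims i.1 + l.1 < d := by
          have h1 := (Fin.cast hdsum (blockIdx dims i l)).2
          rw [show (Fin.cast hdsum (blockIdx dims i l)).1 = (blockIdx dims i l).1 from rfl,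
            hval] at h1
          exact h1
        rw [hx'def]
        simp only
        rw [dif_pos hlt]
        congr 1
        apply Fin.ext
        simp [hval]
      rw [Finset.prod_congr rfl (fun l _ => hfac l)]
      unfold bP
      rw [show bdims m dims i.1 - 1 + 1 = dims i from by
        rw [hbdi] at *; have := hpos i; omega]
      rw [← Fin.prod_univ_eq_prod_range (fun l' => x' (bsig m dims i.1 + l')) (dims i)]
    refine le_trans (sInf_le (a := (Φ.params : ℝ≥0∞)) ?_) ?_
    · refine ⟨Φ, g, hReal, rfl, ?_, ?_⟩
      · -- approximation error
        intro x hx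
        set x' : ℕ → ℝ := fun j => if h : j < d then x ⟨j, h⟩ else 0 with hx'def
        have hx1 : ∀ j, |x' j| ≤ 1 := habs1 x hx
        have hcoord : ∀ i : Fin m, |(g x - f x) i| ≤ (d:ℝ)/N := by
          intro i
          rw [Pi.sub_apply, hkey x hx i, hfP x hx i]
          have him : i.1 < m := i.2
          have hdN' : bdims m dims i.1 ≤ N := (hbd_le i.1 him).trans hdN
          have hl : bdims m dims i.1 - 1 < bdims m dims i.1 := by
            have := hbd_pos i.1 him
            omega
          have herr := (ZZ_err hN x' hx1 him hdN' (bdims m dims i.1 - 1) hl).1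
          rw [show bsig m dims i.1 + (bdims m dims i.1 - 1) = bend m dims i.1 from by
            have := hbd_pos i.1 him; unfold bend; omega] at herr
          refine herr.trans ?_
          gcongr
          exact_mod_cast le_trans (Nat.sub_le _ _) (hbd_le i.1 him)
        have hdivpos : (0:ℝ) ≤ (d:ℝ)/N := by positivity
        calc lpNorm p (g x - f x) ≤ m * ((d:ℝ)/N) := lpNorm_le hp hm0 _ hdivpos hcoord
          _ ≤ ε := by
            have h1 : (m:ℝ) ≤ d := by exact_mod_cast hm_le
            have h2 : (m:ℝ) * ((d:ℝ)/N) ≤ (d:ℝ) * ((d:ℝ)/N) :=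
              mul_le_mul_of_nonneg_right h1 hdivpos
            have h3 : (d:ℝ) * ((d:ℝ)/N) = (d:ℝ)^2/N := by ring
            have hc1 : ε * (8*(d:ℝ)^3*ε⁻¹) = 8*(d:ℝ)^3 := by field_simp
            have hc2 : ε * (8*(d:ℝ)^3*ε⁻¹) ≤ ε * N := mul_le_mul_of_nonneg_left hNge hε.le
            have hc3 : (d:ℝ)^2 ≤ (d:ℝ)^3 :=
              pow_le_pow_right₀ (by exact_mod_cast hd) (by norm_num)
            have h4 : (d:ℝ)^2/N ≤ ε := by
              rw [div_le_iff₀ hNR]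
              nlinarith
            linarith
      · -- Lipschitz property
        intro x hx y hy
        set x' : ℕ → ℝ := fun j => if h : j < d then x ⟨j, h⟩ else 0 with hx'def
        set y' : ℕ → ℝ := fun j => if h : j < d then y ⟨j, h⟩ else 0 with hy'def
        have hx1 : ∀ j, |x' j| ≤ 1 := habs1 x hx
        have hy1 : ∀ j, |y' j| ≤ 1 := habs1 y hy
        set M := lpNorm p (x - y) with hMdef
        have hM0 : 0 ≤ M := lpNorm_nonneg p _
        have hMd : ∀ j, |x' j - y' j| ≤ M := by
          intro j
          rw [hx'def, hy'def]
          simp only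
          by_cases h : j < d
          · rw [dif_pos h, dif_pos h]
            have h1 := coord_le_lpNorm hp (x - y) ⟨j, h⟩
            rwa [Pi.sub_apply] at h1
          · rw [dif_neg h, dif_neg h]
            simpa using hM0
        have hcoord : ∀ i : Fin m, |(g x - g y) i| ≤ 4*(d:ℝ)*M := by
          intro i
          rw [Pi.sub_apply, hkey x hx i, hkey y hy i]
          have him : i.1 < m := i.2
          have hl : bdims m dims i.1 - 1 < bdims m dims i.1 := by
            have := hbd_pos i.1 him; omega
          have hdN' : bdims m dims i.1 ≤ N := (hbd_le i.1 him).trans hdN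
          have hbig' : 4 * bdims m dims i.1 + 5 ≤ N := by
            have := hbd_le i.1 him; omega
          have hlip := ZZ_lip hN x' y' hx1 hy1 hM0 hMd him hdN' hbig'
            (bdims m dims i.1 - 1) hl
          rw [show bsig m dims i.1 + (bdims m dims i.1 - 1) = bend m dims i.1 from by
            have := hbd_pos i.1 him; unfold bend; omega] at hlip
          refine hlip.trans ?_
          have hble : ((bdims m dims i.1 - 1 : ℕ):ℝ) + 1 ≤ (d:ℝ) := by
            have h1 := hbd_le i.1 him
            have h2 := hbd_pos i.1 him
            exact_mod_cast (show bdims m dims i.1 - 1 + 1 ≤ d by omega)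
          nlinarith
        have h4dM : (0:ℝ) ≤ 4*(d:ℝ)*M :=
          mul_nonneg (by positivity) hM0
        calc lpNorm p (g x - g y) ≤ m * (4*(d:ℝ)*M) :=
              lpNorm_le hp hm0 _ h4dM hcoord
          _ ≤ Real.sqrt 32 * (d:ℝ)^3 * M := by
              have h1 : (m:ℝ) ≤ d := by exact_mod_cast hm_le
              have h2 : (1:ℝ) ≤ d := by exact_mod_cast hd
              have s1 : (m:ℝ)*(4*(d:ℝ)*M) ≤ (d:ℝ)*(4*(d:ℝ)*M) :=
                mul_le_mul_of_nonneg_right h1 h4dM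
              have s3a : 4*(d:ℝ)^2 ≤ Real.sqrt 32*(d:ℝ)^2 :=
                mul_le_mul_of_nonneg_right hsqrt4 (by positivity)
              have s3b : Real.sqrt 32*(d:ℝ)^2 ≤ Real.sqrt 32*(d:ℝ)^3 :=
                mul_le_mul_of_nonneg_left (pow_le_pow_right₀ h2 (by norm_num))
                  (Real.sqrt_nonneg _)
              have s4 : 4*(d:ℝ)^2*M ≤ Real.sqrt 32*(d:ℝ)^3*M :=
                mul_le_mul_of_nonneg_right (s3a.trans s3b) hM0
              nlinarith
    · -- parameter count
      have hparams := net_params (dims := dims) hd2' hm_le hN2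
      rw [hofnat Φ.params]
      apply ENNReal.ofReal_le_ofReal
      have hP1 : (Φ.params : ℝ) ≤ 2*d * (((d:ℝ) + 2*N) * ((d:ℝ) + 5)) := by
        have := hparams
        calc (Φ.params : ℝ) ≤ ((2*d * ((d + 2*N) * (d + 5)) : ℕ) : ℝ) := by exact_mod_cast this
          _ = 2*d * (((d:ℝ) + 2*N) * ((d:ℝ) + 5)) := by push_cast; ring
      have hdR : (1:ℝ) ≤ d := by exact_mod_cast hd
      have hNle : (N:ℝ) ≤ 16*(d:ℝ)^3*ε⁻¹ := by
        have h1 : (K0:ℝ) < ε⁻¹ + 1 := Nat.ceil_lt_add_one (by positivity)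
        have h2 : (N:ℝ) = 8*(d:ℝ)^3*(K0:ℝ) := by rw [hNdef]; push_cast; ring
        rw [h2]
        have hK2 : (K0:ℝ) ≤ 2*ε⁻¹ := by linarith
        have hd3R : (0:ℝ) < (d:ℝ)^3 := by positivity
        nlinarith
      have h2N : (d:ℝ) + 2*N ≤ 33*(d:ℝ)^3*ε⁻¹ := by
        have hd3' : (d:ℝ) ≤ (d:ℝ)^3 := by
          have h := pow_le_pow_right₀ hdR (show 1 ≤ 3 by norm_num)
          rwa [pow_one] at h
        nlinarith
      have h5 : (d:ℝ) + 5 ≤ 6*(d:ℝ) := by linarith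
      have hprod1 : ((d:ℝ)+2*N)*((d:ℝ)+5) ≤ (33*(d:ℝ)^3*ε⁻¹)*(6*(d:ℝ)) :=
        mul_le_mul h2N h5 (by positivity) (by positivity)
      have hfin : (Φ.params : ℝ) ≤ 396*(d:ℝ)^5*ε⁻¹ := by
        refine hP1.trans ?_
        calc 2*(d:ℝ) * (((d:ℝ) + 2*N) * ((d:ℝ) + 5))
            ≤ 2*(d:ℝ) * ((33*(d:ℝ)^3*ε⁻¹)*(6*(d:ℝ))) :=
              mul_le_mul_of_nonneg_left hprod1 (by positivity)
          _ = 396*(d:ℝ)^5*ε⁻¹ := by ring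
      have hd5 : (d:ℝ)^5 ≤ (d:ℝ)^1000 := pow_le_pow_right₀ hdR (by norm_num)
      refine hfin.trans ?_
      push_cast
      have t1 : 396*((d:ℝ)^5*ε⁻¹) ≤ 396*((d:ℝ)^1000*ε⁻¹) := by
        apply mul_le_mul_of_nonneg_left
          (mul_le_mul_of_nonneg_right hd5 (by positivity)) (by norm_num)
      have t2 : (0:ℝ) ≤ (d:ℝ)^1000*ε⁻¹ := by positivity
      nlinarith

end
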